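/- arXiv:2202.03684 — 5 statements merged into one kernel-verified Lean document; each statement's English description precedes it below -/
import Mathlib

section
/- Let f : ℝ^d × ℝ^n → ℝ be twice continuously differentiable and μ-strongly concave in y for some μ > 0. Define Φ(x) = max_y f(x,y) with unique maximizer y*(x). If a point x̄ is a strict saddle point of Φ (i.e., ∇Φ(x̄) = 0 and λ_min(∇²Φ(x̄)) < 0), then (x̄, y*(x̄)) is not a strict local Nash equilibrium of f, i.e., it is not the case that ∇²_{xx} f(x̄, y*(x̄)) ≻ 0 and ∇²_{yy} f(x̄, y*(x̄)) ≺ 0. -/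
open scoped RealInnerProductSpace

theorem stmt_0 {d n : ℕ}
    (f : EuclideanSpace ℝ (Fin d) → EuclideanSpace ℝ (Fin n) → ℝ)
    (μ : ℝ) (hμ : 0 < μ)
    (hconc : ∀ x, StrongConcaveOn Set.univ μ (f x))
    (GX : EuclideanSpace ℝ (Fin d) → EuclideanSpace ℝ (Fin n) → EuclideanSpace ℝ (Fin d))
    (GY : EuclideanSpace ℝ (Fin d) → EuclideanSpace ℝ (Fin n) → EuclideanSpace ℝ (Fin n))
    (hGX : ∀ x y, HasGradientAt (fun x' => f x' y) (GX x y) x)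
    (hGY : ∀ x y, HasGradientAt (fun y' => f x y') (GY x y) y)
    (HXX : EuclideanSpace ℝ (Fin d) → EuclideanSpace ℝ (Fin n) →
      EuclideanSpace ℝ (Fin d) →L[ℝ] EuclideanSpace ℝ (Fin d))
    (HXY : EuclideanSpace ℝ (Fin d) → EuclideanSpace ℝ (Fin n) →
      EuclideanSpace ℝ (Fin n) →L[ℝ] EuclideanSpace ℝ (Fin d))
    (HYX : EuclideanSpace ℝ (Fin d) → EuclideanSpace ℝ (Fin n) →
      EuclideanSpace ℝ (Fin d) →L[ℝ] EuclideanSpace ℝ (Fin n))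
    (HYY : EuclideanSpace ℝ (Fin d) → EuclideanSpace ℝ (Fin n) →
      EuclideanSpace ℝ (Fin n) →L[ℝ] EuclideanSpace ℝ (Fin n))
    (hHXX : ∀ x y, HasFDerivAt (fun x' => GX x' y) (HXX x y) x)
    (hHXY : ∀ x y, HasFDerivAt (fun y' => GX x y') (HXY x y) y)
    (hHYX : ∀ x y, HasFDerivAt (fun x' => GY x' y) (HYX x y) x)
    (hHYY : ∀ x y, HasFDerivAt (fun y' => GY x y') (HYY x y) y)
    -- twice *continuously* differentiable
    (hcontXX : Continuous fun p : EuclideanSpace ℝ (Fin d) × EuclideanSpace ℝ (Fin n) => HXX p.1 p.2)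
    (hcontXY : Continuous fun p : EuclideanSpace ℝ (Fin d) × EuclideanSpace ℝ (Fin n) => HXY p.1 p.2)
    (hcontYX : Continuous fun p : EuclideanSpace ℝ (Fin d) × EuclideanSpace ℝ (Fin n) => HYX p.1 p.2)
    (hcontYY : Continuous fun p : EuclideanSpace ℝ (Fin d) × EuclideanSpace ℝ (Fin n) => HYY p.1 p.2)
    (ystar : EuclideanSpace ℝ (Fin d) → EuclideanSpace ℝ (Fin n))
    (hmax : ∀ x y, f x y ≤ f x (ystar x))
    (Φ : EuclideanSpace ℝ (Fin d) → ℝ) (hΦ : ∀ x, Φ x = f x (ystar x))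
    (gradΦ : EuclideanSpace ℝ (Fin d) → EuclideanSpace ℝ (Fin d))
    (hgradΦ : ∀ x, HasGradientAt Φ (gradΦ x) x)
    (HΦ : EuclideanSpace ℝ (Fin d) → EuclideanSpace ℝ (Fin d) →L[ℝ] EuclideanSpace ℝ (Fin d))
    (hHΦ : ∀ x, HasFDerivAt gradΦ (HΦ x) x)
    (xbar : EuclideanSpace ℝ (Fin d))
    (hfo : gradΦ xbar = 0)
    (hneg : ∃ v : EuclideanSpace ℝ (Fin d), v ≠ 0 ∧ ⟪v, HΦ xbar v⟫ < 0) :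
    ¬ ((∀ e : EuclideanSpace ℝ (Fin d), e ≠ 0 → 0 < ⟪e, HXX xbar (ystar xbar) e⟫) ∧
        (∀ w : EuclideanSpace ℝ (Fin n), w ≠ 0 → ⟪w, HYY xbar (ystar xbar) w⟫ < 0)) := by
  rintro ⟨hxx, -⟩
  obtain ⟨v, hv0, hvneg⟩ := hneg
  set ybar := ystar xbar with hybar
  -- the line through xbar in direction v
  set ℓ : ℝ → EuclideanSpace ℝ (Fin d) := fun t => xbar + t • v with hℓdef
  have hℓd : ∀ t : ℝ, HasDerivAt ℓ v t := fun t => by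
    have h := ((hasDerivAt_id t).smul_const v).const_add xbar
    rw [one_smul] at h
    exact h
  have hℓ0 : ℓ 0 = xbar := by simp [hℓdef]
  -- φ t = Φ(ℓ t) - f(ℓ t, ybar) ≥ 0, with φ 0 = 0
  set φ : ℝ → ℝ := fun t => Φ (ℓ t) - f (ℓ t) ybar with hφdef
  have hφnn : ∀ t, 0 ≤ φ t := fun t => by
    have := hmax (ℓ t) ybar
    simp only [hφdef]
    rw [hΦ (ℓ t)]; linarith
  have hφ0 : φ 0 = 0 := by simp [hφdef, hℓ0, hΦ xbar, hybar]
  -- derivative of φ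
  set D : ℝ → ℝ := fun t => ⟪gradΦ (ℓ t) - GX (ℓ t) ybar, v⟫ with hDdef
  have hgrad : ∀ x, HasGradientAt (fun x' => Φ x' - f x' ybar) (gradΦ x - GX x ybar) x := by
    intro x
    have h1 := (hgradΦ x).hasFDerivAt
    have h2 := (hGX x ybar).hasFDerivAt
    apply hasGradientAt_iff_hasFDerivAt.2
    rw [map_sub]
    exact h1.sub h2
  have hφd : ∀ t, HasDerivAt φ (D t) t := by
    intro t
    have h := ((hgrad (ℓ t)).hasFDerivAt).comp_hasDerivAt t (hℓd t)
    simpa only [hφdef, hDdef, Function.comp_def, InnerProductSpace.toDual_apply_apply] using h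
  -- D 0 = 0 since 0 is a local min of φ
  have hmin : IsLocalMin φ 0 := by
    apply Filter.Eventually.of_forall
    intro t; rw [hφ0]; exact hφnn t
  have hD0 : D 0 = 0 := hmin.hasDerivAt_eq_zero (hφd 0)
  -- derivative of D at 0
  set a : ℝ := ⟪(HΦ xbar - HXX xbar ybar) v, v⟫ with hadef
  have hDd : HasDerivAt D a 0 := by
    have hG : HasFDerivAt (fun x => gradΦ x - GX x ybar) (HΦ xbar - HXX xbar ybar) xbar :=
      (hHΦ xbar).sub (hHXX xbar ybar)
    have hGl : HasDerivAt (fun t => gradΦ (ℓ t) - GX (ℓ t) ybar)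
        ((HΦ xbar - HXX xbar ybar) v) 0 := by
      rw [← hℓ0] at hG
      have h := hG.comp_hasDerivAt 0 (hℓd 0)
      rw [hℓ0] at h
      simpa only [Function.comp_def] using h
    have h2 := hGl.inner ℝ (hasDerivAt_const (0:ℝ) v)
    simpa only [hDdef, hadef, inner_zero_right, zero_add] using h2
  have ha : a < 0 := by
    have h1 : (0:ℝ) < ⟪v, HXX xbar ybar v⟫ := hxx v hv0
    have he : a = ⟪v, HΦ xbar v⟫ - ⟪v, HXX xbar ybar v⟫ := by
      rw [hadef, ContinuousLinearMap.sub_apply, inner_sub_left,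
        real_inner_comm ((HΦ xbar) v) v, real_inner_comm ((HXX xbar ybar) v) v]
    rw [he]; linarith
  -- from D'(0) = a < 0 and D 0 = 0, get D t < (a/2) t for small t > 0
  have hslope : Filter.Tendsto (fun t => D t / t) (nhdsWithin 0 {(0:ℝ)}ᶜ) (nhds a) := by
    have h := hasDerivAt_iff_tendsto_slope.1 hDd
    refine h.congr' ?_
    filter_upwards with t
    simp [slope_def_field, hD0, div_eq_inv_mul]
  have heve : ∀ᶠ t in nhdsWithin (0:ℝ) (Set.Ioi 0), D t / t < a / 2 := by
    have h2 := hslope.eventually_lt_const (show a < a/2 by linarith)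
    exact h2.filter_mono (nhdsWithin_mono 0 (fun t ht => ne_of_gt ht))
  obtain ⟨ε, hε, hsub⟩ := mem_nhdsGT_iff_exists_Ioo_subset.1 heve
  have hε0 : (0:ℝ) < ε := hε
  -- Mean value theorem on [0, ε/2]
  have hεh : (0:ℝ) < ε / 2 := by linarith
  obtain ⟨c, hc, hceq⟩ := exists_hasDerivAt_eq_slope φ D hεh
    (fun s _ => (hφd s).continuousAt.continuousWithinAt) (fun s _ => hφd s)
  have hc1 : 0 < c := hc.1
  have hc2 : c < ε := by have := hc.2; linarith
  have hDc : D c / c < a / 2 := hsub ⟨hc1, hc2⟩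
  have hDcneg : D c < 0 := by
    rw [div_lt_iff₀ hc1] at hDc
    nlinarith
  rw [hceq] at hDcneg
  have : 0 ≤ (φ (ε/2) - φ 0) / (ε/2 - 0) := by
    apply div_nonneg
    · rw [hφ0]; simpa using hφnn (ε/2)
    · linarith
  linarith
end

section
/- Let f : ℝ^d × ℝ^n → ℝ be twice continuously differentiable and μ-strongly concave in y, and let Φ(x) = max_y f(x,y) with maximizer y*(x). If (x̄, ȳ) is a strict local Nash equilibrium of f (so ∇f(x̄,ȳ)=0, ∇²_{xx} f(x̄,ȳ) ≻ 0, ∇²_{yy} f(x̄,ȳ) ≺ 0), then ȳ = y*(x̄) and ∇²Φ(x̄) ≻ 0; in particular x̄ is a strict local minimum of Φ. -/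
open scoped RealInnerProductSpace
open InnerProductSpace Filter Set Topology

variable {E : Type*} [NormedAddCommGroup E] [InnerProductSpace ℝ E] [CompleteSpace E]

lemma line_hasDerivAt (x0 v : E) (t : ℝ) :
    HasDerivAt (fun t : ℝ => x0 + t • v) v t := by
  simpa using ((hasDerivAt_id t).smul_const v).const_add x0

lemma grad_line_hasDerivAt {g : E → ℝ} {G x0 v : E} {t : ℝ}
    (hg : HasGradientAt g G (x0 + t • v)) :
    HasDerivAt (fun t : ℝ => g (x0 + t • v)) ⟪G, v⟫ t := by
  have := hg.hasFDerivAt.comp_hasDerivAt t (line_hasDerivAt x0 v t)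
  simpa [toDual_apply_apply, Function.comp_def] using this

set_option linter.unusedSectionVars false

lemma strong_concave_crit_max {g : E → ℝ} {μ : ℝ} (hμ : 0 < μ)
    (hconc : StrongConcaveOn Set.univ μ g) {y0 : E}
    (hg : HasGradientAt g 0 y0) (y : E) :
    g y + μ / 2 * ‖y - y0‖ ^ 2 ≤ g y0 := by
  set v := y - y0 with hv
  have hline : ∀ a : ℝ, y0 + a • v = a • y + (1 - a) • y0 := by
    intro a; rw [hv]; module
  have key : ∀ a : ℝ, a ∈ Set.Ioo (0:ℝ) 1 →
      (g y - g y0) + (1 - a) * (μ / 2 * ‖v‖ ^ 2) ≤ (g (y0 + a • v) - g y0) / a := by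
    intro a ha
    have h2 := hconc.2 (Set.mem_univ y) (Set.mem_univ y0) ha.1.le (by linarith [ha.2])
      (by ring : a + (1 - a) = 1)
    rw [← hline] at h2
    rw [le_div_iff₀ ha.1]
    simp only [smul_eq_mul, ← hv] at h2
    nlinarith [h2]
  have hd : HasDerivAt (fun a : ℝ => g (y0 + a • v)) 0 (0:ℝ) := by
    have hg' : HasGradientAt g 0 (y0 + (0:ℝ) • v) := by simpa using hg
    simpa using grad_line_hasDerivAt hg'
  have hT1 : Tendsto (fun a : ℝ => (g (y0 + a • v) - g y0) / a) (𝓝[>] (0:ℝ)) (𝓝 0) := by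
    have := hasDerivAt_iff_tendsto_slope.mp hd
    have h2 := this.mono_left (nhdsWithin_mono 0 (fun x hx => hx.out.ne' : Set.Ioi (0:ℝ) ⊆ {(0:ℝ)}ᶜ))
    refine h2.congr (fun a => ?_)
    simp [slope_def_field]
  have hT2 : Tendsto (fun a : ℝ => (g y - g y0) + (1 - a) * (μ / 2 * ‖v‖ ^ 2)) (𝓝[>] (0:ℝ))
      (𝓝 ((g y - g y0) + μ / 2 * ‖v‖ ^ 2)) := by
    have : ContinuousAt (fun a : ℝ => (g y - g y0) + (1 - a) * (μ / 2 * ‖v‖ ^ 2)) 0 := by fun_prop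
    have h3 : Tendsto _ (𝓝[>](0:ℝ)) _ := this.tendsto.mono_left nhdsWithin_le_nhds
    simpa using h3
  have hev : ∀ᶠ a in 𝓝[>](0:ℝ), a ∈ Set.Ioo (0:ℝ) 1 :=
    Ioo_mem_nhdsGT_of_mem (by norm_num)
  have hle := le_of_tendsto_of_tendsto hT2 hT1 (hev.mono key)
  linarith

lemma deriv_of_grad_line {G : E → E} {H : E →L[ℝ] E} {x0 v : E} {t : ℝ}
    (hH : HasFDerivAt G H (x0 + t • v)) :
    HasDerivAt (fun t : ℝ => (⟪G (x0 + t • v), v⟫ : ℝ)) ⟪H v, v⟫ t := by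
  have h1 : HasDerivAt (fun t : ℝ => G (x0 + t • v)) (H v) t :=
    hH.comp_hasDerivAt t (line_hasDerivAt x0 v t)
  have := h1.inner ℝ (hasDerivAt_const t v)
  simpa using this

lemma second_order_nonneg {g : E → ℝ} {G : E → E} {H : E →L[ℝ] E} {x0 : E}
    (hG : ∀ x, HasGradientAt g (G x) x) (hH : HasFDerivAt G H x0)
    (hmin : ∀ x, g x0 ≤ g x) (v : E) : 0 ≤ ⟪v, H v⟫ := by
  by_contra hneg
  push_neg at hneg
  set k : ℝ → ℝ := fun t => ⟪G (x0 + t • v), v⟫ with hk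
  have hφ : ∀ t : ℝ, HasDerivAt (fun t : ℝ => g (x0 + t • v)) (k t) t :=
    fun t => grad_line_hasDerivAt (hG _)
  -- k 0 = 0
  have hmin0 : IsLocalMin (fun t : ℝ => g (x0 + t • v)) 0 :=
    Filter.Eventually.of_forall (fun t => by simpa using hmin (x0 + t • v))
  have hk0 : k 0 = 0 := hmin0.hasDerivAt_eq_zero (hφ 0)
  -- derivative of k at 0 is ⟪H v, v⟫ < 0
  have hdk : HasDerivAt k ⟪H v, v⟫ 0 := by
    have : HasFDerivAt G H (x0 + (0:ℝ) • v) := by simpa using hH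
    exact deriv_of_grad_line this
  have hHvv : (⟪H v, v⟫ : ℝ) < 0 := by rwa [real_inner_comm] at hneg
  -- eventually k a < 0 for a > 0 small
  have hslope := (hasDerivAt_iff_tendsto_slope.mp hdk).mono_left
    (nhdsWithin_mono 0 (fun x hx => hx.out.ne' : Set.Ioi (0:ℝ) ⊆ {(0:ℝ)}ᶜ))
  have hev : ∀ᶠ a in 𝓝[>](0:ℝ), slope k 0 a < 0 :=
    hslope.eventually_lt_const hHvv
  have hev2 : ∀ᶠ a in 𝓝[>](0:ℝ), k a < 0 := by
    filter_upwards [hev, self_mem_nhdsWithin] with a ha ha'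
    have : k a / a < 0 := by simpa [slope_def_field, hk0] using ha
    have h0 : (0:ℝ) < a := ha'.out
    have : k a / a * a < 0 := mul_neg_of_neg_of_pos this h0
    rwa [div_mul_cancel₀ _ h0.ne'] at this
  obtain ⟨δ, hδ, hδ'⟩ := (nhdsGT_basis_of_exists_gt ⟨1, one_pos⟩).eventually_iff.mp hev2
  -- MVT on [0, δ/2]
  have ht0 : (0:ℝ) < δ / 2 := by linarith [hδ]
  have hcont : ContinuousOn (fun t : ℝ => g (x0 + t • v)) (Set.Icc 0 (δ/2)) :=
    fun t _ => ((hφ t).continuousAt).continuousWithinAt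
  obtain ⟨c, hc, hceq⟩ := exists_hasDerivAt_eq_slope (fun t : ℝ => g (x0 + t • v)) k ht0 hcont
    (fun t _ => hφ t)
  have hkc : k c < 0 := hδ' ⟨hc.1, lt_trans hc.2 (by linarith)⟩
  rw [hceq] at hkc
  have : g (x0 + (δ/2) • v) < g (x0 + (0:ℝ) • v) := by
    have h2 := mul_neg_of_neg_of_pos hkc (by linarith : (0:ℝ) < δ/2 - 0)
    rw [div_mul_cancel₀ _ (by norm_num; linarith : (δ/2 - 0 : ℝ) ≠ 0)] at h2
    linarith
  simp only [zero_smul, add_zero] at this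
  exact absurd (hmin _) (not_le.mpr this)

lemma strict_min_of_posdef {ψ : E → ℝ} {G : E → E} {H : E → (E →L[ℝ] E)} {x0 : E} {δ : ℝ}
    (hG : ∀ x, HasGradientAt ψ (G x) x) (hH : ∀ x, HasFDerivAt G (H x) x)
    (hG0 : G x0 = 0) (hδ : 0 < δ)
    (hpos : ∀ x : E, ‖x - x0‖ < δ → ∀ v : E, v ≠ 0 → 0 < ⟪v, H x v⟫)
    {x : E} (hx : x ≠ x0) (hxδ : ‖x - x0‖ < δ) : ψ x0 < ψ x := by
  set v := x - x0 with hv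
  have hvne : v ≠ 0 := sub_ne_zero.mpr hx
  set k : ℝ → ℝ := fun t => ⟪G (x0 + t • v), v⟫ with hk
  have hkd : ∀ t : ℝ, HasDerivAt k ⟪H (x0 + t • v) v, v⟫ t :=
    fun t => deriv_of_grad_line (hH _)
  have hball : ∀ t : ℝ, t ∈ Set.Icc (0:ℝ) 1 → ‖(x0 + t • v) - x0‖ < δ := by
    intro t ht
    have h1 : ‖(x0 + t • v) - x0‖ = |t| * ‖v‖ := by
      rw [add_sub_cancel_left, norm_smul, Real.norm_eq_abs]
    rw [h1, abs_of_nonneg ht.1]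
    calc t * ‖v‖ ≤ 1 * ‖v‖ := by
          exact mul_le_mul_of_nonneg_right ht.2 (norm_nonneg v)
      _ = ‖v‖ := one_mul _
      _ < δ := hxδ
  have hkmono : StrictMonoOn k (Set.Icc 0 1) := by
    refine strictMonoOn_of_deriv_pos (convex_Icc 0 1)
      (fun t _ => ((hkd t).continuousAt).continuousWithinAt) (fun t ht => ?_)
    rw [interior_Icc] at ht
    rw [(hkd t).deriv, real_inner_comm]
    exact hpos _ (hball t ⟨ht.1.le, ht.2.le⟩) v hvne
  have hk0 : k 0 = 0 := by simp [hk, hG0]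
  have hφd : ∀ t : ℝ, HasDerivAt (fun t : ℝ => ψ (x0 + t • v)) (k t) t :=
    fun t => grad_line_hasDerivAt (hG _)
  have hφmono : StrictMonoOn (fun t : ℝ => ψ (x0 + t • v)) (Set.Icc 0 1) := by
    refine strictMonoOn_of_deriv_pos (convex_Icc 0 1)
      (fun t _ => ((hφd t).continuousAt).continuousWithinAt) (fun t ht => ?_)
    rw [interior_Icc] at ht
    rw [(hφd t).deriv]
    have := hkmono (Set.left_mem_Icc.mpr zero_le_one) ⟨ht.1.le, ht.2.le⟩ ht.1
    rwa [hk0] at this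
  have := hφmono (Set.left_mem_Icc.mpr zero_le_one) (Set.right_mem_Icc.mpr zero_le_one)
    zero_lt_one
  simpa [hv] using this

lemma posdef_uniform {d : ℕ} {A : EuclideanSpace ℝ (Fin d) →L[ℝ] EuclideanSpace ℝ (Fin d)}
    (hA : ∀ e : EuclideanSpace ℝ (Fin d), e ≠ 0 → 0 < ⟪e, A e⟫)
    {e0 : EuclideanSpace ℝ (Fin d)} (he0 : e0 ≠ 0) :
    ∃ m > (0:ℝ), ∀ e : EuclideanSpace ℝ (Fin d), m * ‖e‖ ^ 2 ≤ ⟪e, A e⟫ := by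
  have hScomp : IsCompact (Metric.sphere (0 : EuclideanSpace ℝ (Fin d)) 1) :=
    isCompact_sphere _ _
  have hmemunit : ∀ e : EuclideanSpace ℝ (Fin d), e ≠ 0 →
      ‖e‖⁻¹ • e ∈ Metric.sphere (0 : EuclideanSpace ℝ (Fin d)) 1 := by
    intro e he
    rw [mem_sphere_zero_iff_norm, norm_smul, norm_inv, norm_norm,
      inv_mul_cancel₀ (norm_ne_zero_iff.mpr he)]
  have hSne : (Metric.sphere (0 : EuclideanSpace ℝ (Fin d)) 1).Nonempty :=
    ⟨_, hmemunit e0 he0⟩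
  have hcont : ContinuousOn (fun e : EuclideanSpace ℝ (Fin d) => (⟪e, A e⟫ : ℝ))
      (Metric.sphere (0 : EuclideanSpace ℝ (Fin d)) 1) :=
    (continuous_id.inner A.continuous).continuousOn
  obtain ⟨u, hu, humin⟩ := hScomp.exists_isMinOn hSne hcont
  have hu1 : ‖u‖ = 1 := mem_sphere_zero_iff_norm.mp hu
  have hune : u ≠ 0 := by intro h; rw [h, norm_zero] at hu1; norm_num at hu1
  refine ⟨⟪u, A u⟫, hA u hune, fun e => ?_⟩
  rcases eq_or_ne e 0 with rfl | he
  · simp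
  · have hne : (0:ℝ) < ‖e‖ := norm_pos_iff.mpr he
    have hmin := isMinOn_iff.mp humin _ (hmemunit e he)
    have hcalc : (⟪‖e‖⁻¹ • e, A (‖e‖⁻¹ • e)⟫ : ℝ) = ‖e‖⁻¹ * (‖e‖⁻¹ * ⟪e, A e⟫) := by
      rw [map_smul, real_inner_smul_left, real_inner_smul_right]
    rw [hcalc] at hmin
    have h2 : ⟪u, A u⟫ * ‖e‖ ^ 2 ≤ ‖e‖⁻¹ * (‖e‖⁻¹ * ⟪e, A e⟫) * ‖e‖ ^ 2 :=
      mul_le_mul_of_nonneg_right hmin (by positivity)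
    calc ⟪u, A u⟫ * ‖e‖ ^ 2 ≤ ‖e‖⁻¹ * (‖e‖⁻¹ * ⟪e, A e⟫) * ‖e‖ ^ 2 := h2
      _ = (‖e‖⁻¹ * ‖e‖) * ((‖e‖⁻¹ * ‖e‖) * ⟪e, A e⟫) := by ring
      _ = ⟪e, A e⟫ := by rw [inv_mul_cancel₀ hne.ne']; ring
theorem stmt_1 {d n : ℕ}
    (f : EuclideanSpace ℝ (Fin d) → EuclideanSpace ℝ (Fin n) → ℝ)
    (μ : ℝ) (hμ : 0 < μ)
    (hconc : ∀ x, StrongConcaveOn Set.univ μ (f x))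
    (GX : EuclideanSpace ℝ (Fin d) → EuclideanSpace ℝ (Fin n) → EuclideanSpace ℝ (Fin d))
    (GY : EuclideanSpace ℝ (Fin d) → EuclideanSpace ℝ (Fin n) → EuclideanSpace ℝ (Fin n))
    (hGX : ∀ x y, HasGradientAt (fun x' => f x' y) (GX x y) x)
    (hGY : ∀ x y, HasGradientAt (fun y' => f x y') (GY x y) y)
    (HXX : EuclideanSpace ℝ (Fin d) → EuclideanSpace ℝ (Fin n) →
      EuclideanSpace ℝ (Fin d) →L[ℝ] EuclideanSpace ℝ (Fin d))
    (HXY : EuclideanSpace ℝ (Fin d) → EuclideanSpace ℝ (Fin n) →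
      EuclideanSpace ℝ (Fin n) →L[ℝ] EuclideanSpace ℝ (Fin d))
    (HYX : EuclideanSpace ℝ (Fin d) → EuclideanSpace ℝ (Fin n) →
      EuclideanSpace ℝ (Fin d) →L[ℝ] EuclideanSpace ℝ (Fin n))
    (HYY : EuclideanSpace ℝ (Fin d) → EuclideanSpace ℝ (Fin n) →
      EuclideanSpace ℝ (Fin n) →L[ℝ] EuclideanSpace ℝ (Fin n))
    (hHXX : ∀ x y, HasFDerivAt (fun x' => GX x' y) (HXX x y) x)
    (hHXY : ∀ x y, HasFDerivAt (fun y' => GX x y') (HXY x y) y)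
    (hHYX : ∀ x y, HasFDerivAt (fun x' => GY x' y) (HYX x y) x)
    (hHYY : ∀ x y, HasFDerivAt (fun y' => GY x y') (HYY x y) y)
    -- twice *continuously* differentiable
    (hcontXX : Continuous fun p : EuclideanSpace ℝ (Fin d) × EuclideanSpace ℝ (Fin n) => HXX p.1 p.2)
    (hcontXY : Continuous fun p : EuclideanSpace ℝ (Fin d) × EuclideanSpace ℝ (Fin n) => HXY p.1 p.2)
    (hcontYX : Continuous fun p : EuclideanSpace ℝ (Fin d) × EuclideanSpace ℝ (Fin n) => HYX p.1 p.2)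
    (hcontYY : Continuous fun p : EuclideanSpace ℝ (Fin d) × EuclideanSpace ℝ (Fin n) => HYY p.1 p.2)
    (ystar : EuclideanSpace ℝ (Fin d) → EuclideanSpace ℝ (Fin n))
    (hmax : ∀ x y, f x y ≤ f x (ystar x))
    (Φ : EuclideanSpace ℝ (Fin d) → ℝ) (hΦ : ∀ x, Φ x = f x (ystar x))
    (gradΦ : EuclideanSpace ℝ (Fin d) → EuclideanSpace ℝ (Fin d))
    (hgradΦ : ∀ x, HasGradientAt Φ (gradΦ x) x)
    (HΦ : EuclideanSpace ℝ (Fin d) → EuclideanSpace ℝ (Fin d) →L[ℝ] EuclideanSpace ℝ (Fin d))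
    (hHΦ : ∀ x, HasFDerivAt gradΦ (HΦ x) x)
    (xbar : EuclideanSpace ℝ (Fin d)) (ybar : EuclideanSpace ℝ (Fin n))
    -- strict local Nash equilibrium at (xbar, ybar)
    (hfoX : GX xbar ybar = 0) (hfoY : GY xbar ybar = 0)
    (hXXpos : ∀ e : EuclideanSpace ℝ (Fin d), e ≠ 0 → 0 < ⟪e, HXX xbar ybar e⟫)
    (hYYneg : ∀ w : EuclideanSpace ℝ (Fin n), w ≠ 0 → ⟪w, HYY xbar ybar w⟫ < 0) :
    ybar = ystar xbar ∧
      (∀ v : EuclideanSpace ℝ (Fin d), v ≠ 0 → 0 < ⟪v, HΦ xbar v⟫) ∧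
      ∃ ε > (0 : ℝ), ∀ x, x ≠ xbar → ‖x - xbar‖ < ε → Φ xbar < Φ x := by
  -- Part 1
  have hg0 : HasGradientAt (f xbar) 0 ybar := hfoY ▸ hGY xbar ybar
  have h1 := strong_concave_crit_max hμ (hconc xbar) hg0 (ystar xbar)
  have h2 := hmax xbar ybar
  have hpart1 : ybar = ystar xbar := by
    have hs := sq_nonneg ‖ystar xbar - ybar‖
    have hle : μ / 2 * ‖ystar xbar - ybar‖ ^ 2 ≤ 0 := by linarith
    have hsq : ‖ystar xbar - ybar‖ ^ 2 ≤ 0 := by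
      by_contra hpos
      push_neg at hpos
      nlinarith
    have h0 : ystar xbar - ybar = 0 :=
      norm_eq_zero.mp ((pow_eq_zero_iff two_ne_zero).mp (le_antisymm hsq hs))
    exact (sub_eq_zero.mp h0).symm
  have hval : f xbar (ystar xbar) = f xbar ybar := by rw [← hpart1]
  -- Global minimum of the gap function
  have hmin : ∀ x, (fun x => Φ x - f x ybar) xbar ≤ (fun x => Φ x - f x ybar) x := by
    intro x
    simp only [hΦ xbar, hΦ x, hval]
    have := hmax x ybar
    linarith
  have hGG : ∀ x, HasGradientAt (fun x => Φ x - f x ybar) (gradΦ x - GX x ybar) x := by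
    intro x
    have h := (hgradΦ x).hasFDerivAt.sub (hGX x ybar).hasFDerivAt
    rw [hasGradientAt_iff_hasFDerivAt, map_sub]
    exact h
  have hHH : HasFDerivAt (fun x => gradΦ x - GX x ybar) (HΦ xbar - HXX xbar ybar) xbar :=
    (hHΦ xbar).sub (hHXX xbar ybar)
  have hpart2 : ∀ v : EuclideanSpace ℝ (Fin d), v ≠ 0 → 0 < ⟪v, HΦ xbar v⟫ := by
    intro v hv
    have h3 := second_order_nonneg hGG hHH hmin v
    rw [ContinuousLinearMap.sub_apply, inner_sub_right] at h3
    linarith [hXXpos v hv]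
  refine ⟨hpart1, hpart2, ?_⟩
  -- Part 3
  by_cases hdeg : ∃ e0 : EuclideanSpace ℝ (Fin d), e0 ≠ 0
  · obtain ⟨e0, he0⟩ := hdeg
    obtain ⟨m, hm, hmA⟩ := posdef_uniform hXXpos he0
    have hca : ContinuousAt (fun x => HXX x ybar) xbar :=
      (hcontXX.comp (continuous_id.prodMk continuous_const)).continuousAt
    have hev : ∀ᶠ x in nhds xbar, ‖HXX x ybar - HXX xbar ybar‖ < m / 2 := by
      have h4 := Metric.tendsto_nhds.mp hca.tendsto (m / 2) (by linarith)
      filter_upwards [h4] with x hx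
      rwa [dist_eq_norm] at hx
    obtain ⟨δ, hδpos, hδ⟩ := Metric.eventually_nhds_iff.mp hev
    have hposball : ∀ x : EuclideanSpace ℝ (Fin d), ‖x - xbar‖ < δ →
        ∀ v : EuclideanSpace ℝ (Fin d), v ≠ 0 → 0 < ⟪v, HXX x ybar v⟫ := by
      intro x hx v hv
      have hd : ‖HXX x ybar - HXX xbar ybar‖ < m / 2 := hδ (by rwa [dist_eq_norm])
      have h1' : m * ‖v‖ ^ 2 ≤ ⟪v, HXX xbar ybar v⟫ := hmA v
      have h2' : |⟪v, (HXX x ybar - HXX xbar ybar) v⟫| ≤ m / 2 * ‖v‖ ^ 2 := by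
        calc |⟪v, (HXX x ybar - HXX xbar ybar) v⟫|
            ≤ ‖v‖ * ‖(HXX x ybar - HXX xbar ybar) v‖ := abs_real_inner_le_norm _ _
          _ ≤ ‖v‖ * (‖HXX x ybar - HXX xbar ybar‖ * ‖v‖) := by
              gcongr; exact ContinuousLinearMap.le_opNorm _ _
          _ ≤ m / 2 * ‖v‖ ^ 2 := by nlinarith [norm_nonneg v, hd.le]
      have h3' : (⟪v, HXX x ybar v⟫ : ℝ)
          = ⟪v, HXX xbar ybar v⟫ + ⟪v, (HXX x ybar - HXX xbar ybar) v⟫ := by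
        rw [ContinuousLinearMap.sub_apply, inner_sub_right]; ring
      have hv2 : 0 < ‖v‖ ^ 2 := pow_pos (norm_pos_iff.mpr hv) 2
      have habs := abs_le.mp h2'
      rw [h3']
      nlinarith
    refine ⟨δ, hδpos, fun x hx hxd => ?_⟩
    have hlt : f xbar ybar < f x ybar :=
      strict_min_of_posdef (fun x => hGX x ybar) (fun x => hHXX x ybar) hfoX hδpos
        hposball hx hxd
    calc Φ xbar = f xbar ybar := by rw [hΦ xbar, hval]
      _ < f x ybar := hlt
      _ ≤ f x (ystar x) := hmax x ybar
      _ = Φ x := (hΦ x).symm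
  · push_neg at hdeg
    refine ⟨1, one_pos, fun x hx _ => absurd ?_ hx⟩
    have := hdeg (x - xbar)
    exact sub_eq_zero.mp this
end

section
/- Let f : ℝ^d × ℝ^n → ℝ be twice continuously differentiable and μ-strongly concave in y. A point (x̄, ȳ) is a strict local minimax point of f (i.e., ∇f(x̄,ȳ)=0, ∇²_{yy} f(x̄,ȳ) ≺ 0, and ∇²_{xx} f − ∇²_{xy} f (∇²_{yy} f)^{-1} ∇²_{yx} f ≻ 0 at (x̄,ȳ)) if and only if x̄ satisfies ∇Φ(x̄) = 0 and ∇²Φ(x̄) ≻ 0, where Φ(x) = max_y f(x,y) and ȳ = y*(x̄) is the unique maximizer. -/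
open scoped RealInnerProductSpace Topology
open Filter Asymptotics


open scoped RealInnerProductSpace

section Aux

-- L1: gradient at a global max is zero
lemma aux_grad_zero_of_max {F : Type*} [NormedAddCommGroup F] [InnerProductSpace ℝ F]
    [CompleteSpace F]
    {g : F → ℝ} {G y₀ : F} (hmax : ∀ y, g y ≤ g y₀) (hG : HasGradientAt g G y₀) : G = 0 := by
  have hloc : IsLocalMax g y₀ := Filter.Eventually.of_forall hmax
  have := hloc.hasFDerivAt_eq_zero hG.hasFDerivAt
  have h2 : (InnerProductSpace.toDual ℝ F) G = 0 := this
  simpa using (InnerProductSpace.toDual ℝ F).map_eq_zero_iff.mp h2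

-- L2: first-order condition for strong concavity
lemma aux_strong_grad {F : Type*} [NormedAddCommGroup F] [InnerProductSpace ℝ F] [CompleteSpace F]
    {g : F → ℝ} {μ : ℝ} (hc : StrongConcaveOn Set.univ μ g)
    {x y : F} {Gx : F} (hG : HasGradientAt g Gx x) :
    g y - g x + μ / 2 * ‖y - x‖ ^ 2 ≤ ⟪Gx, y - x⟫ := by
  have hline : HasDerivAt (fun t : ℝ => g (x + t • (y - x))) ⟪Gx, y - x⟫ 0 := by
    have h1 : HasDerivAt (fun t : ℝ => x + t • (y - x)) (y - x) 0 := by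
      simpa using ((hasDerivAt_id (0:ℝ)).smul_const (y - x)).const_add x
    have hG' : HasFDerivAt g ((InnerProductSpace.toDual ℝ F) Gx) (x + (0:ℝ) • (y - x)) := by
      simpa using hG.hasFDerivAt
    have h2 := hG'.comp_hasDerivAt (0:ℝ) h1
    simpa [InnerProductSpace.toDual_apply_apply, Function.comp_def] using h2
  have hslope : Tendsto (fun t : ℝ => (g (x + t • (y - x)) - g x) / t) (𝓝[>] (0:ℝ))
      (𝓝 ⟪Gx, y - x⟫) := by
    have h3 := hasDerivWithinAt_iff_tendsto_slope.mp (hline.hasDerivWithinAt (s := Set.Ioi (0:ℝ)))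
    have h4 : Tendsto (slope (fun t : ℝ => g (x + t • (y - x))) 0) (𝓝[>] (0:ℝ))
        (𝓝 ⟪Gx, y - x⟫) := h3.mono_left (nhdsWithin_mono _ (by
          intro t ht; exact ⟨ht, ne_of_gt ht⟩))
    refine h4.congr' ?_
    filter_upwards [self_mem_nhdsWithin] with t ht
    simp [slope_def_field, div_eq_inv_mul]
  have hrhs : Tendsto (fun t : ℝ => g y - g x + (1 - t) * (μ / 2 * ‖y - x‖ ^ 2)) (𝓝[>] (0:ℝ))
      (𝓝 (g y - g x + μ / 2 * ‖y - x‖ ^ 2)) := by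
    have hcont : ContinuousAt (fun t : ℝ => g y - g x + (1 - t) * (μ / 2 * ‖y - x‖ ^ 2)) 0 := by
      fun_prop
    simpa using (hcont.continuousWithinAt (s := Set.Ioi (0:ℝ))).tendsto
  refine le_of_tendsto_of_tendsto hrhs hslope ?_
  filter_upwards [Ioo_mem_nhdsGT_of_mem (by norm_num : (0:ℝ) ∈ Set.Ico 0 1)] with t ht
  obtain ⟨ht0, ht1⟩ := ht
  have key := hc.2 (Set.mem_univ y) (Set.mem_univ x) (le_of_lt ht0)
    (by linarith : (0:ℝ) ≤ 1 - t) (by ring)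
  have hpt : t • y + (1 - t) • x = x + t • (y - x) := by
    rw [smul_sub, sub_smul, one_smul]; abel
  rw [hpt] at key
  simp only [smul_eq_mul] at key
  rw [le_div_iff₀ ht0]
  nlinarith [key]

-- L3: gradient monotonicity for strongly concave functions
lemma aux_strong_mono {F : Type*} [NormedAddCommGroup F] [InnerProductSpace ℝ F] [CompleteSpace F]
    {g : F → ℝ} {μ : ℝ} (hc : StrongConcaveOn Set.univ μ g)
    {x y Gx Gy : F} (hGx : HasGradientAt g Gx x) (hGy : HasGradientAt g Gy y) :
    ⟪Gy - Gx, y - x⟫ ≤ -(μ * ‖y - x‖ ^ 2) := by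
  have h1 := aux_strong_grad hc hGx (y := y)
  have h2 := aux_strong_grad hc hGy (y := x)
  have hxy : ‖x - y‖ = ‖y - x‖ := norm_sub_rev _ _
  have h3 : ⟪Gy, x - y⟫ = -⟪Gy, y - x⟫ := by
    rw [← inner_neg_neg]; simp
  rw [inner_sub_left]
  rw [hxy, h3] at h2
  linarith

-- L8: Hessian of a strongly concave function is ≤ -μ definite
lemma aux_hess_neg {F : Type*} [NormedAddCommGroup F] [InnerProductSpace ℝ F] [CompleteSpace F]
    {g : F → ℝ} {μ : ℝ} (hc : StrongConcaveOn Set.univ μ g)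
    {G : F → F} (hG : ∀ y, HasGradientAt g (G y) y)
    {y₀ : F} {H : F →L[ℝ] F} (hH : HasFDerivAt G H y₀) (w : F) :
    ⟪H w, w⟫ ≤ -(μ * ‖w‖ ^ 2) := by
  have hline : HasDerivAt (fun t : ℝ => G (y₀ + t • w)) (H w) 0 := by
    have h1 : HasDerivAt (fun t : ℝ => y₀ + t • w) w 0 := by
      simpa using ((hasDerivAt_id (0:ℝ)).smul_const w).const_add y₀
    have hH' : HasFDerivAt G H (y₀ + (0:ℝ) • w) := by simpa using hH
    simpa [Function.comp_def] using hH'.comp_hasDerivAt (0:ℝ) h1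
  have hslope : Tendsto (fun t : ℝ => ⟪t⁻¹ • (G (y₀ + t • w) - G y₀), w⟫) (𝓝[>] (0:ℝ))
      (𝓝 ⟪H w, w⟫) := by
    have h3 := hasDerivWithinAt_iff_tendsto_slope.mp (hline.hasDerivWithinAt (s := Set.Ioi (0:ℝ)))
    have h4 : Tendsto (slope (fun t : ℝ => G (y₀ + t • w)) 0) (𝓝[>] (0:ℝ)) (𝓝 (H w)) :=
      h3.mono_left (nhdsWithin_mono _ (by intro t ht; exact ⟨ht, ne_of_gt ht⟩))
    have hcont : Continuous fun v : F => (⟪v, w⟫ : ℝ) :=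
      continuous_inner.comp (continuous_id.prodMk continuous_const)
    refine ((hcont.tendsto (H w)).comp h4).congr' ?_
    filter_upwards [self_mem_nhdsWithin] with t ht
    simp [slope, Function.comp]
  refine le_of_tendsto hslope ?_
  filter_upwards [self_mem_nhdsWithin] with t ht
  have key := aux_strong_mono hc (hG y₀) (hG (y₀ + t • w)) (μ := μ)
  have hd : y₀ + t • w - y₀ = t • w := by abel
  rw [hd] at key
  have hn : ‖t • w‖ ^ 2 = t ^ 2 * ‖w‖ ^ 2 := by
    rw [norm_smul]; simp [Real.norm_eq_abs, mul_pow, sq_abs]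
  rw [real_inner_smul_right] at key
  rw [real_inner_smul_left]
  have ht' : (0:ℝ) < t := ht
  rw [hn] at key
  have hinv : t⁻¹ * ⟪G (y₀ + t • w) - G y₀, w⟫ = (t * ⟪G (y₀ + t • w) - G y₀, w⟫) / t ^ 2 := by
    field_simp
  rw [hinv, div_le_iff₀ (by positivity)]
  nlinarith [key]

-- L4a: mean value trick
lemma aux_mvt_littleo {X Y Z : Type*} [NormedAddCommGroup X] [NormedSpace ℝ X]
    [NormedAddCommGroup Y] [NormedSpace ℝ Y] [NormedAddCommGroup Z] [NormedSpace ℝ Z]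
    (g : X → Y → Z) (B : X → Y → (Y →L[ℝ] Z))
    (hB : ∀ x y, HasFDerivAt (g x) (B x y) y)
    (hBc : Continuous fun p : X × Y => B p.1 p.2)
    (φ : X → Y) {xbar : X} {ybar : Y}
    (hO : (fun x => φ x - ybar) =O[𝓝 xbar] (fun x => x - xbar)) :
    (fun x => g x (φ x) - g x ybar - B xbar ybar (φ x - ybar)) =o[𝓝 xbar]
      (fun x => x - xbar) := by
  rw [isLittleO_iff]
  intro c hc
  obtain ⟨C, hC, hCb⟩ := hO.exists_pos
  rw [IsBigOWith] at hCb
  set ε := c / C with hε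
  have hε0 : 0 < ε := div_pos hc hC
  have hcont : ContinuousAt (fun p : X × Y => B p.1 p.2) (xbar, ybar) := hBc.continuousAt
  rw [Metric.continuousAt_iff] at hcont
  obtain ⟨δ, hδ0, hδ⟩ := hcont ε hε0
  have hmem : Metric.ball xbar (min (δ/2) (δ/(2*(C+1)))) ∈ 𝓝 xbar :=
    Metric.ball_mem_nhds _ (by positivity)
  filter_upwards [hCb, hmem] with x hx hxball
  rw [Metric.mem_ball, lt_min_iff] at hxball
  have hxd : dist x xbar < δ / 2 := hxball.1
  have hxd2 : ‖x - xbar‖ < δ / (2*(C+1)) := by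
    have := hxball.2
    simpa [dist_eq_norm] using this
  have hφd : ‖φ x - ybar‖ < δ / 2 := by
    calc ‖φ x - ybar‖ ≤ C * ‖x - xbar‖ := hx
    _ < C * (δ / (2*(C+1))) := mul_lt_mul_of_pos_left hxd2 hC
    _ ≤ δ / 2 := by
        rw [← mul_div_assoc, div_le_div_iff₀ (by positivity) (by norm_num)]
        nlinarith
  set s := Metric.ball ybar (δ/2) with hs
  have hconv : Convex ℝ s := convex_ball _ _
  have hysb : ybar ∈ s := Metric.mem_ball_self (by positivity)
  have hφs : φ x ∈ s := by simpa [hs, Metric.mem_ball, dist_eq_norm] using hφd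
  have hderiv : ∀ y ∈ s, HasFDerivWithinAt (fun y' => g x y' - B xbar ybar y')
      (B x y - B xbar ybar) s y := fun y hy =>
    (((hB x y).sub ((B xbar ybar).hasFDerivAt)).hasFDerivWithinAt)
  have hbound : ∀ y ∈ s, ‖B x y - B xbar ybar‖ ≤ ε := by
    intro y hy
    have hdy : dist (x, y) (xbar, ybar) < δ := by
      rw [Prod.dist_eq]
      refine max_lt (lt_of_lt_of_le hxd (by linarith)) ?_
      have : dist y ybar < δ / 2 := hy
      linarith
    have := hδ hdy
    rw [dist_eq_norm] at this
    exact this.le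
  have hmv := hconv.norm_image_sub_le_of_norm_hasFDerivWithin_le hderiv hbound hysb hφs
  have heq : g x (φ x) - B xbar ybar (φ x) - (g x ybar - B xbar ybar ybar)
      = g x (φ x) - g x ybar - B xbar ybar (φ x - ybar) := by
    rw [map_sub]; abel
  rw [heq] at hmv
  calc ‖g x (φ x) - g x ybar - B xbar ybar (φ x - ybar)‖ ≤ ε * ‖φ x - ybar‖ := hmv
  _ ≤ ε * (C * ‖x - xbar‖) := mul_le_mul_of_nonneg_left hx hε0.le
  _ = c * ‖x - xbar‖ := by
      have hεC : ε * C = c := div_mul_cancel₀ c (ne_of_gt hC)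
      rw [← hεC]; ring

end Aux


theorem stmt_3 {d n : ℕ}
    (f : EuclideanSpace ℝ (Fin d) → EuclideanSpace ℝ (Fin n) → ℝ)
    (μ : ℝ) (hμ : 0 < μ)
    (hconc : ∀ x, StrongConcaveOn Set.univ μ (f x))
    (GX : EuclideanSpace ℝ (Fin d) → EuclideanSpace ℝ (Fin n) → EuclideanSpace ℝ (Fin d))
    (GY : EuclideanSpace ℝ (Fin d) → EuclideanSpace ℝ (Fin n) → EuclideanSpace ℝ (Fin n))
    (hGX : ∀ x y, HasGradientAt (fun x' => f x' y) (GX x y) x)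
    (hGY : ∀ x y, HasGradientAt (fun y' => f x y') (GY x y) y)
    (HXX : EuclideanSpace ℝ (Fin d) → EuclideanSpace ℝ (Fin n) →
      EuclideanSpace ℝ (Fin d) →L[ℝ] EuclideanSpace ℝ (Fin d))
    (HXY : EuclideanSpace ℝ (Fin d) → EuclideanSpace ℝ (Fin n) →
      EuclideanSpace ℝ (Fin n) →L[ℝ] EuclideanSpace ℝ (Fin d))
    (HYX : EuclideanSpace ℝ (Fin d) → EuclideanSpace ℝ (Fin n) →
      EuclideanSpace ℝ (Fin d) →L[ℝ] EuclideanSpace ℝ (Fin n))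
    (HYY : EuclideanSpace ℝ (Fin d) → EuclideanSpace ℝ (Fin n) →
      EuclideanSpace ℝ (Fin n) →L[ℝ] EuclideanSpace ℝ (Fin n))
    (hHXX : ∀ x y, HasFDerivAt (fun x' => GX x' y) (HXX x y) x)
    (hHXY : ∀ x y, HasFDerivAt (fun y' => GX x y') (HXY x y) y)
    (hHYX : ∀ x y, HasFDerivAt (fun x' => GY x' y) (HYX x y) x)
    (hHYY : ∀ x y, HasFDerivAt (fun y' => GY x y') (HYY x y) y)
    -- twice *continuously* differentiable
    (hcontXX : Continuous fun p : EuclideanSpace ℝ (Fin d) × EuclideanSpace ℝ (Fin n) => HXX p.1 p.2)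
    (hcontXY : Continuous fun p : EuclideanSpace ℝ (Fin d) × EuclideanSpace ℝ (Fin n) => HXY p.1 p.2)
    (hcontYX : Continuous fun p : EuclideanSpace ℝ (Fin d) × EuclideanSpace ℝ (Fin n) => HYX p.1 p.2)
    (hcontYY : Continuous fun p : EuclideanSpace ℝ (Fin d) × EuclideanSpace ℝ (Fin n) => HYY p.1 p.2)
    (ystar : EuclideanSpace ℝ (Fin d) → EuclideanSpace ℝ (Fin n))
    (hmax : ∀ x y, f x y ≤ f x (ystar x))
    (Φ : EuclideanSpace ℝ (Fin d) → ℝ) (hΦ : ∀ x, Φ x = f x (ystar x))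
    (gradΦ : EuclideanSpace ℝ (Fin d) → EuclideanSpace ℝ (Fin d))
    (hgradΦ : ∀ x, HasGradientAt Φ (gradΦ x) x)
    (HΦ : EuclideanSpace ℝ (Fin d) → EuclideanSpace ℝ (Fin d) →L[ℝ] EuclideanSpace ℝ (Fin d))
    (hHΦ : ∀ x, HasFDerivAt gradΦ (HΦ x) x)
    (xbar : EuclideanSpace ℝ (Fin d)) (ybar : EuclideanSpace ℝ (Fin n))
    (hybar : ybar = ystar xbar)
    -- inverse of the yy-block Hessian at (xbar, ybar)
    (HYYinv : EuclideanSpace ℝ (Fin n) →L[ℝ] EuclideanSpace ℝ (Fin n))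
    (hHYYinv₁ : (HYY xbar ybar).comp HYYinv = ContinuousLinearMap.id ℝ _)
    (hHYYinv₂ : HYYinv.comp (HYY xbar ybar) = ContinuousLinearMap.id ℝ _) :
    (GX xbar ybar = 0 ∧ GY xbar ybar = 0 ∧
        (∀ w : EuclideanSpace ℝ (Fin n), w ≠ 0 → ⟪w, HYY xbar ybar w⟫ < 0) ∧
        (∀ e : EuclideanSpace ℝ (Fin d), e ≠ 0 →
          0 < ⟪e, HXX xbar ybar e - HXY xbar ybar (HYYinv (HYX xbar ybar e))⟫))
      ↔ (gradΦ xbar = 0 ∧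
          ∀ e : EuclideanSpace ℝ (Fin d), e ≠ 0 → 0 < ⟪e, HΦ xbar e⟫) := by
  subst hybar
  -- GY vanishes along ystar
  have hGY0 : ∀ x, GY x (ystar x) = 0 := fun x =>
    aux_grad_zero_of_max (hmax x) (hGY x (ystar x))
  -- Danskin: gradΦ x = GX x (ystar x) for every x
  have hgradeq : ∀ x, gradΦ x = GX x (ystar x) := by
    intro x
    have hsub : HasFDerivAt (fun x' => Φ x' - f x' (ystar x))
        ((InnerProductSpace.toDual ℝ _) (gradΦ x) -
          (InnerProductSpace.toDual ℝ _) (GX x (ystar x))) x :=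
      (hgradΦ x).hasFDerivAt.sub (hGX x (ystar x)).hasFDerivAt
    have hmin : IsLocalMin (fun x' => Φ x' - f x' (ystar x)) x := by
      refine Filter.Eventually.of_forall fun x' => ?_
      have h1 := hmax x' (ystar x)
      simp only [hΦ]
      linarith
    have hz := hmin.hasFDerivAt_eq_zero hsub
    have hz2 : (InnerProductSpace.toDual ℝ _) (gradΦ x - GX x (ystar x)) = 0 := by
      rw [map_sub]; exact hz
    have := (InnerProductSpace.toDual ℝ _).map_eq_zero_iff.mp hz2
    rwa [sub_eq_zero] at this
  -- ystar is O(x - xbar)-close to ystar xbar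
  have hO : (fun x => ystar x - ystar xbar) =O[𝓝 xbar] (fun x => x - xbar) := by
    have h1 : (fun x => GY x (ystar xbar)) =O[𝓝 xbar] (fun x => x - xbar) := by
      have := (hHYX xbar (ystar xbar)).isBigO_sub
      simpa [hGY0 xbar] using this
    refine IsBigO.trans ?_ h1
    refine isBigO_of_le' (c := μ⁻¹) _ fun x => ?_
    have key := aux_strong_mono (hconc x) (hGY x (ystar x)) (hGY x (ystar xbar))
    rw [hGY0 x, sub_zero] at key
    have hcs := abs_real_inner_le_norm (GY x (ystar xbar)) (ystar xbar - ystar x)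
    have hcs2 := neg_abs_le (⟪GY x (ystar xbar), ystar xbar - ystar x⟫ : ℝ)
    have hnn : ‖ystar x - ystar xbar‖ = ‖ystar xbar - ystar x‖ := norm_sub_rev _ _
    rcases eq_or_ne (ystar x) (ystar xbar) with h | h
    · simp [h]; positivity
    · have hpos : 0 < ‖ystar xbar - ystar x‖ := by
        rw [norm_pos_iff, sub_ne_zero]; exact fun hh => h hh.symm
      have : μ * ‖ystar xbar - ystar x‖ ^ 2 ≤ ‖GY x (ystar xbar)‖ * ‖ystar xbar - ystar x‖ := by
        nlinarith [key, hcs, hcs2]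
      rw [hnn]
      rw [inv_mul_eq_div, le_div_iff₀ hμ]
      nlinarith [this, hpos]
  -- derivative of ystar at xbar
  set D : EuclideanSpace ℝ (Fin d) →L[ℝ] EuclideanSpace ℝ (Fin n) :=
    -(HYYinv.comp (HYX xbar (ystar xbar))) with hD
  have hE1 := aux_mvt_littleo GY HYY hHYY hcontYY ystar hO
  have hE2 := (hHYX xbar (ystar xbar)).isLittleO
  have hystar : HasFDerivAt ystar D xbar := by
    refine HasFDerivAt.of_isLittleO ?_
    have hsum := hE1.add hE2
    have hcomp : (fun x => -(HYYinv ((GY x (ystar x) - GY x (ystar xbar) -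
        (HYY xbar (ystar xbar)) (ystar x - ystar xbar)) +
        (GY x (ystar xbar) - GY xbar (ystar xbar) - (HYX xbar (ystar xbar)) (x - xbar)))))
        =o[𝓝 xbar] (fun x => x - xbar) := by
      refine IsBigO.trans_isLittleO ?_ hsum
      exact (HYYinv.isBigO_comp _ _).neg_left
    refine hcomp.congr' (Filter.Eventually.of_forall fun x => ?_) (Filter.EventuallyEq.rfl)
    have hid : ∀ v, HYYinv ((HYY xbar (ystar xbar)) v) = v := fun v => by
      have := congrFun (congrArg DFunLike.coe hHYYinv₂) v
      simpa using this
    simp only [hGY0 x, hGY0 xbar, hD, map_add, map_sub, map_zero,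
      ContinuousLinearMap.neg_apply, ContinuousLinearMap.comp_apply, hid]
    abel
  -- derivative of gradΦ at xbar
  have hT1 := aux_mvt_littleo GX HXY hHXY hcontXY ystar hO
  have hT2 := (hHXX xbar (ystar xbar)).isLittleO
  have hT3 : (fun x => (HXY xbar (ystar xbar)) (ystar x - ystar xbar - D (x - xbar)))
      =o[𝓝 xbar] (fun x => x - xbar) :=
    IsBigO.trans_isLittleO ((HXY xbar (ystar xbar)).isBigO_comp _ _) hystar.isLittleO
  have hHΦeq : HΦ xbar = HXX xbar (ystar xbar) + (HXY xbar (ystar xbar)).comp D := by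
    refine (hHΦ xbar).unique ?_
    refine HasFDerivAt.of_isLittleO ?_
    have hsum := (hT1.add hT2).add hT3
    refine hsum.congr' (Filter.Eventually.of_forall fun x => ?_) (Filter.EventuallyEq.rfl)
    simp only [hgradeq x, hgradeq xbar, ContinuousLinearMap.add_apply,
      ContinuousLinearMap.comp_apply, map_sub]
    abel
  -- quadratic form of HΦ
  have hquad : ∀ e, HΦ xbar e = HXX xbar (ystar xbar) e -
      HXY xbar (ystar xbar) (HYYinv (HYX xbar (ystar xbar) e)) := by
    intro e
    rw [hHΦeq]
    simp only [ContinuousLinearMap.add_apply, ContinuousLinearMap.comp_apply, hD,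
      ContinuousLinearMap.neg_apply, map_neg]
    abel
  -- HYY is negative definite
  have hneg : ∀ w : EuclideanSpace ℝ (Fin n), w ≠ 0 → ⟪w, HYY xbar (ystar xbar) w⟫ < 0 := by
    intro w hw
    have h1 := aux_hess_neg (hconc xbar) (hGY xbar) (hHYY xbar (ystar xbar)) w
    have hw' : 0 < ‖w‖ := norm_pos_iff.mpr hw
    rw [real_inner_comm]
    nlinarith [h1, mul_pos hμ (pow_pos hw' 2)]
  -- gradΦ xbar = GX xbar (ystar xbar)
  have hgx := hgradeq xbar
  constructor
  · rintro ⟨hGX0, -, -, hschur⟩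
    refine ⟨by rw [hgx, hGX0], fun e he => ?_⟩
    rw [hquad e]
    exact hschur e he
  · rintro ⟨hg0, hpos⟩
    refine ⟨by rw [← hgx]; exact hg0, hGY0 xbar, hneg, fun e he => ?_⟩
    have := hpos e he
    rwa [hquad e] at this
end

section
/- Suppose g : ℝ^d × ℝ^n → ℝ is three times continuously differentiable and μ-strongly convex in y, with ‖∇²_{xy} g‖ ≤ ℓ and all third-order partial derivatives bounded by ρ in operator norm. Let y*(x) = argmin_y g(x,y). Then the second derivative of the implicit map satisfies ‖∂²y*(x)/∂x²‖ ≤ (ρ/μ)(1 + ℓ/μ)². -/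
open scoped RealInnerProductSpace
open Filter Set

section aux
variable {F : Type*} [NormedAddCommGroup F] [InnerProductSpace ℝ F] [CompleteSpace F]

lemma strongConvex_inner_aux {f : F → ℝ} {μ : ℝ}
    (hsc : StrongConvexOn Set.univ μ f)
    {G : F → F} (hG : ∀ z, HasGradientAt f (G z) z)
    {y : F} {H : F →L[ℝ] F} (hH : HasFDerivAt G H y) (w : F) :
    μ * ‖w‖ ^ 2 ≤ ⟪H w, w⟫ := by
  set c : ℝ := μ * ‖w‖ ^ 2 with hc
  have hline : ∀ t : ℝ, HasDerivAt (fun s : ℝ => y + s • w) w t := by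
    intro t
    simpa using ((hasDerivAt_id t).smul_const w).const_add y
  have hφ : ∀ t : ℝ, HasDerivAt (fun s : ℝ => f (y + s • w))
      (⟪G (y + t • w), w⟫) t := by
    intro t
    have h1 : HasFDerivAt f (InnerProductSpace.toDual ℝ F (G (y + t • w))) (y + t • w) :=
      (hG (y + t • w)).hasFDerivAt
    have := h1.comp_hasDerivAt t (hline t)
    simpa [InnerProductSpace.toDual_apply_apply, Function.comp_def] using this
  have hψ' : ∀ t : ℝ, HasDerivAt (fun s : ℝ => f (y + s • w) - c / 2 * s ^ 2)
      (⟪G (y + t • w), w⟫ - c * t) t := by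
    intro t
    have h2 : HasDerivAt (fun s : ℝ => c / 2 * s ^ 2) (c / 2 * (↑2 * t ^ 1)) t :=
      (hasDerivAt_pow 2 t).const_mul (c / 2)
    have := (hφ t).sub h2
    have e : ⟪G (y + t • w), w⟫ - c * t = ⟪G (y + t • w), w⟫ - c / 2 * (↑2 * t ^ 1) := by ring
    rw [e]; exact this
  have hψc : ConvexOn ℝ Set.univ (fun t : ℝ => f (y + t • w) - c / 2 * t ^ 2) := by
    refine ⟨convex_univ, ?_⟩
    intro t₁ _ t₂ _ a b ha hb hab
    obtain rfl : b = 1 - a := by linarith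
    have hpt : a • (y + t₁ • w) + (1 - a) • (y + t₂ • w)
        = y + (a * t₁ + (1 - a) * t₂) • w := by module
    have hkey := hsc.2 (Set.mem_univ (y + t₁ • w)) (Set.mem_univ (y + t₂ • w)) ha hb hab
    rw [hpt] at hkey
    have hdiff : (y + t₁ • w) - (y + t₂ • w) = (t₁ - t₂) • w := by module
    rw [hdiff, norm_smul] at hkey
    simp only [smul_eq_mul, Real.norm_eq_abs, mul_pow, sq_abs] at hkey ⊢
    have hring : c / 2 * (a * t₁ + (1 - a) * t₂) ^ 2
        = a * (c / 2 * t₁ ^ 2) + (1 - a) * (c / 2 * t₂ ^ 2)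
          - a * (1 - a) * (μ / 2 * ((t₁ - t₂) ^ 2 * ‖w‖ ^ 2)) := by
      rw [hc]; ring
    linarith [hkey]
  have hmono : ∀ t : ℝ, 0 < t → c * t ≤ ⟪G (y + t • w) - G y, w⟫ := by
    intro t ht
    have h1 := hψc.le_slope_of_hasDerivAt (Set.mem_univ (0:ℝ)) (Set.mem_univ t) ht (hψ' 0)
    have h2 := hψc.slope_le_of_hasDerivAt (Set.mem_univ (0:ℝ)) (Set.mem_univ t) ht (hψ' t)
    have h3 : ⟪G (y + (0:ℝ) • w), w⟫ - c * 0 ≤ ⟪G (y + t • w), w⟫ - c * t := le_trans h1 h2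
    simp only [zero_smul, add_zero, mul_zero, sub_zero] at h3
    rw [inner_sub_left]
    linarith
  set q : ℝ → ℝ := fun t => ⟪w, G (y + t • w) - G y⟫ with hqdef
  have hGline : HasDerivAt (fun t : ℝ => G (y + t • w) - G y) (H w) 0 := by
    have h0 : HasFDerivAt G H ((fun t : ℝ => y + t • w) 0) := by simpa using hH
    exact (h0.comp_hasDerivAt 0 (hline 0)).sub_const (G y)
  have hq : HasDerivAt q (⟪w, H w⟫) 0 :=
    (innerSL ℝ w).hasFDerivAt.comp_hasDerivAt 0 hGline
  have hq0 : q 0 = 0 := by simp [hqdef]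
  have hslope : Tendsto (slope q 0) (nhdsWithin 0 (Set.Ioi 0)) (nhds ⟪w, H w⟫) :=
    (hasDerivAt_iff_tendsto_slope.mp hq).mono_left
      (nhdsWithin_mono 0 (fun t ht => ne_of_gt ht))
  have hge : c ≤ ⟪w, H w⟫ := by
    refine ge_of_tendsto hslope ?_
    filter_upwards [self_mem_nhdsWithin] with t ht
    have h := hmono t ht
    have ht' : (0:ℝ) < t := ht
    rw [slope_def_field, hq0, sub_zero, sub_zero, le_div_iff₀ ht']
    calc c * t ≤ ⟪G (y + t • w) - G y, w⟫ := h
      _ = q t := by rw [hqdef]; exact real_inner_comm _ _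
  calc c ≤ ⟪w, H w⟫ := hge
    _ = ⟪H w, w⟫ := real_inner_comm _ _

lemma strongConvex_norm_aux {f : F → ℝ} {μ : ℝ} (hμ : 0 < μ)
    (hsc : StrongConvexOn Set.univ μ f)
    {G : F → F} (hG : ∀ z, HasGradientAt f (G z) z)
    {y : F} {H : F →L[ℝ] F} (hH : HasFDerivAt G H y) (w : F) :
    μ * ‖w‖ ≤ ‖H w‖ := by
  rcases eq_or_ne w 0 with rfl | hw
  · simp
  have h1 := strongConvex_inner_aux hsc hG hH w
  have h2 : ⟪H w, w⟫ ≤ ‖H w‖ * ‖w‖ := real_inner_le_norm _ _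
  have hw' : (0:ℝ) < ‖w‖ := norm_pos_iff.mpr hw
  nlinarith

end aux

set_option maxHeartbeats 1000000 in
/-- Bound on the second derivative of the implicit solution map `y*(x)`. -/
theorem stmt_15 {d n : ℕ}
    (g : EuclideanSpace ℝ (Fin d) → EuclideanSpace ℝ (Fin n) → ℝ)
    (μ ℓ ρ : ℝ) (hμ : 0 < μ)
    (hsc : ∀ x, StrongConvexOn Set.univ μ (g x))
    (GY : EuclideanSpace ℝ (Fin d) → EuclideanSpace ℝ (Fin n) → EuclideanSpace ℝ (Fin n))
    (hGY : ∀ x y, HasGradientAt (g x) (GY x y) y)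
    -- second derivatives of g in y
    (HYY : EuclideanSpace ℝ (Fin d) → EuclideanSpace ℝ (Fin n) →
      EuclideanSpace ℝ (Fin n) →L[ℝ] EuclideanSpace ℝ (Fin n))
    (hHYY : ∀ x y, HasFDerivAt (fun y' => GY x y') (HYY x y) y)
    (HXY : EuclideanSpace ℝ (Fin d) → EuclideanSpace ℝ (Fin n) →
      EuclideanSpace ℝ (Fin d) →L[ℝ] EuclideanSpace ℝ (Fin n))
    (hHXY : ∀ x y, HasFDerivAt (fun x' => GY x' y) (HXY x y) x)
    (hHXYbound : ∀ x y, ‖HXY x y‖ ≤ ℓ)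
    -- third derivatives of g, all bounded by ρ in operator norm
    (DxHXY : EuclideanSpace ℝ (Fin d) → EuclideanSpace ℝ (Fin n) →
      EuclideanSpace ℝ (Fin d) →L[ℝ] EuclideanSpace ℝ (Fin d) →L[ℝ] EuclideanSpace ℝ (Fin n))
    (hDxHXY : ∀ x y, HasFDerivAt (fun x' => HXY x' y) (DxHXY x y) x)
    (DyHXY : EuclideanSpace ℝ (Fin d) → EuclideanSpace ℝ (Fin n) →
      EuclideanSpace ℝ (Fin n) →L[ℝ] EuclideanSpace ℝ (Fin d) →L[ℝ] EuclideanSpace ℝ (Fin n))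
    (hDyHXY : ∀ x y, HasFDerivAt (fun y' => HXY x y') (DyHXY x y) y)
    (DxHYY : EuclideanSpace ℝ (Fin d) → EuclideanSpace ℝ (Fin n) →
      EuclideanSpace ℝ (Fin d) →L[ℝ] EuclideanSpace ℝ (Fin n) →L[ℝ] EuclideanSpace ℝ (Fin n))
    (hDxHYY : ∀ x y, HasFDerivAt (fun x' => HYY x' y) (DxHYY x y) x)
    (DyHYY : EuclideanSpace ℝ (Fin d) → EuclideanSpace ℝ (Fin n) →
      EuclideanSpace ℝ (Fin n) →L[ℝ] EuclideanSpace ℝ (Fin n) →L[ℝ] EuclideanSpace ℝ (Fin n))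
    (hDyHYY : ∀ x y, HasFDerivAt (fun y' => HYY x y') (DyHYY x y) y)
    (hDxHXYbound : ∀ x y, ‖DxHXY x y‖ ≤ ρ)
    (hDyHXYbound : ∀ x y, ‖DyHXY x y‖ ≤ ρ)
    (hDxHYYbound : ∀ x y, ‖DxHYY x y‖ ≤ ρ)
    (hDyHYYbound : ∀ x y, ‖DyHYY x y‖ ≤ ρ)
    -- the solution map and its first and second derivatives
    (ystar : EuclideanSpace ℝ (Fin d) → EuclideanSpace ℝ (Fin n))
    (hmin : ∀ x y, g x (ystar x) ≤ g x y)
    (J : EuclideanSpace ℝ (Fin d) →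
      EuclideanSpace ℝ (Fin d) →L[ℝ] EuclideanSpace ℝ (Fin n))
    (hJ : ∀ x, HasFDerivAt ystar (J x) x)
    (J' : EuclideanSpace ℝ (Fin d) →
      EuclideanSpace ℝ (Fin d) →L[ℝ] EuclideanSpace ℝ (Fin d) →L[ℝ] EuclideanSpace ℝ (Fin n))
    (hJ' : ∀ x, HasFDerivAt J (J' x) x) :
    ∀ x, ‖J' x‖ ≤ ρ / μ * (1 + ℓ / μ) ^ 2 := by
  have hρ0 : (0:ℝ) ≤ ρ := (norm_nonneg (DxHXY 0 0)).trans (hDxHXYbound 0 0)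
  have hℓ0 : (0:ℝ) ≤ ℓ := (norm_nonneg (HXY 0 0)).trans (hHXYbound 0 0)
  -- coercivity of HYY
  have hcoerc : ∀ x y w, μ * ‖w‖ ≤ ‖HYY x y w‖ := fun x y w =>
    strongConvex_norm_aux hμ (hsc x) (hGY x) (hHYY x y) w
  have hcomp : ∀ x y (A : EuclideanSpace ℝ (Fin d) →L[ℝ] EuclideanSpace ℝ (Fin n)),
      μ * ‖A‖ ≤ ‖(HYY x y).comp A‖ := by
    intro x y A
    have hA : ‖A‖ ≤ ‖(HYY x y).comp A‖ / μ := by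
      refine ContinuousLinearMap.opNorm_le_bound _ (div_nonneg (norm_nonneg _) hμ.le) ?_
      intro v
      have h1 := hcoerc x y (A v)
      have h2 : ‖HYY x y (A v)‖ ≤ ‖(HYY x y).comp A‖ * ‖v‖ :=
        ((HYY x y).comp A).le_opNorm v
      rw [div_mul_eq_mul_div, le_div_iff₀ hμ]
      calc ‖A v‖ * μ = μ * ‖A v‖ := mul_comm _ _
        _ ≤ ‖HYY x y (A v)‖ := h1
        _ ≤ ‖(HYY x y).comp A‖ * ‖v‖ := h2
    rw [le_div_iff₀ hμ] at hA
    linarith [hA]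
  -- the gradient vanishes at the minimizer
  have hgrad0 : ∀ x, GY x (ystar x) = 0 := by
    intro x
    have hloc : IsLocalMin (g x) (ystar x) := Filter.Eventually.of_forall (hmin x)
    have h := hloc.hasFDerivAt_eq_zero (hGY x (ystar x)).hasFDerivAt
    have h2 := congrArg (InnerProductSpace.toDual ℝ (EuclideanSpace ℝ (Fin n))).symm h
    simpa using h2
  -- Lipschitz bounds from the third derivative bounds
  have lipxHXY : ∀ y x₁ x₂, ‖HXY x₂ y - HXY x₁ y‖ ≤ ρ * ‖x₂ - x₁‖ := fun y x₁ x₂ =>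
    Convex.norm_image_sub_le_of_norm_hasFDerivWithin_le
      (fun z _ => (hDxHXY z y).hasFDerivWithinAt) (fun z _ => hDxHXYbound z y)
      convex_univ (mem_univ x₁) (mem_univ x₂)
  have lipyHXY : ∀ x y₁ y₂, ‖HXY x y₂ - HXY x y₁‖ ≤ ρ * ‖y₂ - y₁‖ := fun x y₁ y₂ =>
    Convex.norm_image_sub_le_of_norm_hasFDerivWithin_le
      (fun z _ => (hDyHXY x z).hasFDerivWithinAt) (fun z _ => hDyHXYbound x z)
      convex_univ (mem_univ y₁) (mem_univ y₂)
  have lipxHYY : ∀ y x₁ x₂, ‖HYY x₂ y - HYY x₁ y‖ ≤ ρ * ‖x₂ - x₁‖ := fun y x₁ x₂ =>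
    Convex.norm_image_sub_le_of_norm_hasFDerivWithin_le
      (fun z _ => (hDxHYY z y).hasFDerivWithinAt) (fun z _ => hDxHYYbound z y)
      convex_univ (mem_univ x₁) (mem_univ x₂)
  have lipyHYY : ∀ x y₁ y₂, ‖HYY x y₂ - HYY x y₁‖ ≤ ρ * ‖y₂ - y₁‖ := fun x y₁ y₂ =>
    Convex.norm_image_sub_le_of_norm_hasFDerivWithin_le
      (fun z _ => (hDyHYY x z).hasFDerivWithinAt) (fun z _ => hDyHYYbound x z)
      convex_univ (mem_univ y₁) (mem_univ y₂)
  -- quantitative Taylor bound for GY in the x-variable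
  have taylor : ∀ y x₀ x, ‖GY x y - GY x₀ y - HXY x₀ y (x - x₀)‖
      ≤ (ρ * ‖x - x₀‖) * ‖x - x₀‖ := by
    intro y x₀ x
    refine Convex.norm_image_sub_le_of_norm_hasFDerivWithin_le'
      (f := fun z => GY z y) (f' := fun z => HXY z y) (φ := HXY x₀ y)
      (s := Metric.closedBall x₀ ‖x - x₀‖)
      (fun z _ => (hHXY z y).hasFDerivWithinAt)
      (fun z hz => ?_) (convex_closedBall _ _)
      (Metric.mem_closedBall_self (norm_nonneg _))
      (by simp [Metric.mem_closedBall, dist_eq_norm])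
    calc ‖HXY z y - HXY x₀ y‖ ≤ ρ * ‖z - x₀‖ := lipxHXY y x₀ z
      _ ≤ ρ * ‖x - x₀‖ := by
          refine mul_le_mul_of_nonneg_left ?_ hρ0
          rw [Metric.mem_closedBall, dist_eq_norm] at hz
          exact hz
  -- the first-order implicit identity
  have hKey : ∀ x, (HYY x (ystar x)).comp (J x) = - HXY x (ystar x) := by
    intro x₀
    set y₀ := ystar x₀ with hy₀
    have hT3 : HasFDerivAt (fun x => GY x₀ (ystar x)) ((HYY x₀ y₀).comp (J x₀)) x₀ :=
      (hHYY x₀ y₀).comp x₀ (hJ x₀)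
    have hF : HasFDerivAt (fun x => GY x (ystar x))
        (HXY x₀ y₀ + (HYY x₀ y₀).comp (J x₀)) x₀ := by
      refine HasFDerivAt.of_isLittleO ?_
      rw [Asymptotics.isLittleO_iff]
      intro c hc
      have hE3 := Asymptotics.isLittleO_iff.mp hT3.isLittleO
        (show (0:ℝ) < c/3 by linarith)
      have hε : (0:ℝ) < c / (3 * (ρ + 1)) := by
        apply div_pos hc
        linarith
      have hcont : ContinuousAt ystar x₀ := (hJ x₀).differentiableAt.continuousAt
      have hE2 : ∀ᶠ x in nhds x₀, ‖ystar x - y₀‖ ≤ c / (3 * (ρ + 1)) := by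
        have h := Metric.tendsto_nhds.mp hcont _ hε
        filter_upwards [h] with x hx
        rw [dist_eq_norm] at hx
        exact hx.le
      have hE1 : ∀ᶠ x in nhds x₀, ‖x - x₀‖ ≤ c / (3 * (ρ + 1)) := by
        filter_upwards [Metric.closedBall_mem_nhds x₀ hε] with x hx
        rw [Metric.mem_closedBall, dist_eq_norm] at hx
        exact hx
      filter_upwards [hE1, hE2, hE3] with x h1 h2 h3
      have hsplit : GY x (ystar x) - GY x₀ y₀
            - (HXY x₀ y₀ + (HYY x₀ y₀).comp (J x₀)) (x - x₀)
          = (GY x (ystar x) - GY x₀ (ystar x) - HXY x₀ (ystar x) (x - x₀))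
            + ((HXY x₀ (ystar x) - HXY x₀ y₀) (x - x₀))
            + (GY x₀ (ystar x) - GY x₀ y₀ - ((HYY x₀ y₀).comp (J x₀)) (x - x₀)) := by
        simp only [ContinuousLinearMap.add_apply, ContinuousLinearMap.sub_apply]
        abel
      rw [hsplit]
      have t1 := taylor (ystar x) x₀ x
      have t2 : ‖(HXY x₀ (ystar x) - HXY x₀ y₀) (x - x₀)‖
          ≤ (ρ * ‖ystar x - y₀‖) * ‖x - x₀‖ := by
        calc ‖(HXY x₀ (ystar x) - HXY x₀ y₀) (x - x₀)‖
            ≤ ‖HXY x₀ (ystar x) - HXY x₀ y₀‖ * ‖x - x₀‖ :=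
              (HXY x₀ (ystar x) - HXY x₀ y₀).le_opNorm _
          _ ≤ (ρ * ‖ystar x - y₀‖) * ‖x - x₀‖ :=
              mul_le_mul_of_nonneg_right (lipyHXY x₀ y₀ (ystar x)) (norm_nonneg _)
      have key1 : ρ * ‖x - x₀‖ ≤ c / 3 := by
        have hd : c / (3 * (ρ + 1)) * (ρ + 1) = c / 3 := by
          field_simp
        calc ρ * ‖x - x₀‖ ≤ ρ * (c / (3 * (ρ + 1))) :=
              mul_le_mul_of_nonneg_left h1 hρ0
          _ ≤ (ρ + 1) * (c / (3 * (ρ + 1))) := by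
              refine mul_le_mul_of_nonneg_right (by linarith) hε.le
          _ = c / 3 := by rw [mul_comm]; exact hd
      have key2 : ρ * ‖ystar x - y₀‖ ≤ c / 3 := by
        have hd : c / (3 * (ρ + 1)) * (ρ + 1) = c / 3 := by
          field_simp
        calc ρ * ‖ystar x - y₀‖ ≤ ρ * (c / (3 * (ρ + 1))) :=
              mul_le_mul_of_nonneg_left h2 hρ0
          _ ≤ (ρ + 1) * (c / (3 * (ρ + 1))) := by
              refine mul_le_mul_of_nonneg_right (by linarith) hε.le
          _ = c / 3 := by rw [mul_comm]; exact hd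
      calc ‖(GY x (ystar x) - GY x₀ (ystar x) - HXY x₀ (ystar x) (x - x₀))
            + ((HXY x₀ (ystar x) - HXY x₀ y₀) (x - x₀))
            + (GY x₀ (ystar x) - GY x₀ y₀ - ((HYY x₀ y₀).comp (J x₀)) (x - x₀))‖
          ≤ ‖GY x (ystar x) - GY x₀ (ystar x) - HXY x₀ (ystar x) (x - x₀)‖
            + ‖(HXY x₀ (ystar x) - HXY x₀ y₀) (x - x₀)‖
            + ‖GY x₀ (ystar x) - GY x₀ y₀ - ((HYY x₀ y₀).comp (J x₀)) (x - x₀)‖ :=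
            norm_add₃_le
        _ ≤ (ρ * ‖x - x₀‖) * ‖x - x₀‖ + (ρ * ‖ystar x - y₀‖) * ‖x - x₀‖
            + c / 3 * ‖x - x₀‖ := by
            gcongr
        _ ≤ c / 3 * ‖x - x₀‖ + c / 3 * ‖x - x₀‖ + c / 3 * ‖x - x₀‖ := by
            gcongr
        _ = c * ‖x - x₀‖ := by ring
    have h0 : HasFDerivAt (fun x => GY x (ystar x))
        (0 : EuclideanSpace ℝ (Fin d) →L[ℝ] EuclideanSpace ℝ (Fin n)) x₀ := by
      have hfun : (fun x => GY x (ystar x)) = fun _ => (0 : EuclideanSpace ℝ (Fin n)) :=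
        funext hgrad0
      rw [hfun]
      exact hasFDerivAt_const 0 x₀
    have hL0 : HXY x₀ y₀ + (HYY x₀ y₀).comp (J x₀) = 0 := hF.unique h0
    rw [eq_neg_iff_add_eq_zero]
    rw [add_comm]
    exact hL0
  -- bound on J
  have hJbound : ∀ x, ‖J x‖ ≤ ℓ / μ := by
    intro x
    have h1 := hcomp x (ystar x) (J x)
    rw [hKey x, norm_neg] at h1
    have h2 := hHXYbound x (ystar x)
    rw [le_div_iff₀ hμ]
    calc ‖J x‖ * μ = μ * ‖J x‖ := mul_comm _ _
      _ ≤ ℓ := le_trans h1 h2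
  -- ystar is Lipschitz
  have hylip : ∀ x₁ x₂, ‖ystar x₂ - ystar x₁‖ ≤ ℓ / μ * ‖x₂ - x₁‖ := fun x₁ x₂ =>
    Convex.norm_image_sub_le_of_norm_hasFDerivWithin_le
      (fun z _ => (hJ z).hasFDerivWithinAt) (fun z _ => hJbound z)
      convex_univ (mem_univ x₁) (mem_univ x₂)
  -- J is Lipschitz with the desired constant
  set C : ℝ := ρ / μ * (1 + ℓ / μ) ^ 2 with hC
  have hC0 : (0:ℝ) ≤ C := mul_nonneg (div_nonneg hρ0 hμ.le) (sq_nonneg _)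
  have hJlip : ∀ x₁ x₂, ‖J x₂ - J x₁‖ ≤ C * ‖x₂ - x₁‖ := by
    intro x₁ x₂
    set y₁ := ystar x₁
    set y₂ := ystar x₂
    have heq : (HYY x₁ y₁).comp (J x₂ - J x₁)
        = (HYY x₁ y₁ - HYY x₂ y₂).comp (J x₂) + (HXY x₁ y₁ - HXY x₂ y₂) := by
      refine ContinuousLinearMap.ext fun v => ?_
      have e1 : HYY x₁ y₁ (J x₁ v) = -(HXY x₁ y₁ v) := by
        have := ContinuousLinearMap.ext_iff.mp (hKey x₁) v
        simpa using this
      have e2 : HYY x₂ y₂ (J x₂ v) = -(HXY x₂ y₂ v) := by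
        have := ContinuousLinearMap.ext_iff.mp (hKey x₂) v
        simpa using this
      simp only [ContinuousLinearMap.comp_apply, ContinuousLinearMap.sub_apply,
        ContinuousLinearMap.add_apply, map_sub]
      rw [e1, e2]
      module
    have hstep1 : μ * ‖J x₂ - J x₁‖ ≤ ‖(HYY x₁ y₁).comp (J x₂ - J x₁)‖ := hcomp x₁ y₁ _
    have hstep2 : ‖(HYY x₁ y₁).comp (J x₂ - J x₁)‖
        ≤ ‖HYY x₁ y₁ - HYY x₂ y₂‖ * ‖J x₂‖ + ‖HXY x₁ y₁ - HXY x₂ y₂‖ := by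
      rw [heq]
      calc ‖(HYY x₁ y₁ - HYY x₂ y₂).comp (J x₂) + (HXY x₁ y₁ - HXY x₂ y₂)‖
          ≤ ‖(HYY x₁ y₁ - HYY x₂ y₂).comp (J x₂)‖ + ‖HXY x₁ y₁ - HXY x₂ y₂‖ :=
            norm_add_le _ _
        _ ≤ ‖HYY x₁ y₁ - HYY x₂ y₂‖ * ‖J x₂‖ + ‖HXY x₁ y₁ - HXY x₂ y₂‖ := by
            gcongr
            exact ContinuousLinearMap.opNorm_comp_le _ _
    have hyy : ‖HYY x₁ y₁ - HYY x₂ y₂‖ ≤ ρ * (1 + ℓ / μ) * ‖x₂ - x₁‖ := by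
      calc ‖HYY x₁ y₁ - HYY x₂ y₂‖
          ≤ ‖HYY x₁ y₁ - HYY x₂ y₁‖ + ‖HYY x₂ y₁ - HYY x₂ y₂‖ := by
            have : HYY x₁ y₁ - HYY x₂ y₂ = (HYY x₁ y₁ - HYY x₂ y₁) + (HYY x₂ y₁ - HYY x₂ y₂) := by
              abel
            rw [this]; exact norm_add_le _ _
        _ ≤ ρ * ‖x₁ - x₂‖ + ρ * ‖y₁ - y₂‖ := by
            gcongr
            · exact lipxHYY y₁ x₂ x₁
            · exact lipyHYY x₂ y₂ y₁
        _ ≤ ρ * ‖x₂ - x₁‖ + ρ * (ℓ / μ * ‖x₂ - x₁‖) := by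
            rw [norm_sub_rev (x₁) x₂]
            gcongr
            rw [norm_sub_rev]
            exact hylip x₁ x₂
        _ = ρ * (1 + ℓ / μ) * ‖x₂ - x₁‖ := by ring
    have hxy : ‖HXY x₁ y₁ - HXY x₂ y₂‖ ≤ ρ * (1 + ℓ / μ) * ‖x₂ - x₁‖ := by
      calc ‖HXY x₁ y₁ - HXY x₂ y₂‖
          ≤ ‖HXY x₁ y₁ - HXY x₂ y₁‖ + ‖HXY x₂ y₁ - HXY x₂ y₂‖ := by
            have : HXY x₁ y₁ - HXY x₂ y₂ = (HXY x₁ y₁ - HXY x₂ y₁) + (HXY x₂ y₁ - HXY x₂ y₂) := by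
              abel
            rw [this]; exact norm_add_le _ _
        _ ≤ ρ * ‖x₁ - x₂‖ + ρ * ‖y₁ - y₂‖ := by
            gcongr
            · exact lipxHXY y₁ x₂ x₁
            · exact lipyHXY x₂ y₂ y₁
        _ ≤ ρ * ‖x₂ - x₁‖ + ρ * (ℓ / μ * ‖x₂ - x₁‖) := by
            rw [norm_sub_rev (x₁) x₂]
            gcongr
            rw [norm_sub_rev]
            exact hylip x₁ x₂
        _ = ρ * (1 + ℓ / μ) * ‖x₂ - x₁‖ := by ring
    have hμJ : μ * ‖J x₂ - J x₁‖ ≤ ρ * (1 + ℓ / μ) ^ 2 * ‖x₂ - x₁‖ := by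
      have hJ2 := hJbound x₂
      have h := le_trans hstep1 hstep2
      have h1μ : (0:ℝ) ≤ 1 + ℓ / μ := by
        have := div_nonneg hℓ0 hμ.le; linarith
      have htot : ‖HYY x₁ y₁ - HYY x₂ y₂‖ * ‖J x₂‖ + ‖HXY x₁ y₁ - HXY x₂ y₂‖
          ≤ (ρ * (1 + ℓ / μ) * ‖x₂ - x₁‖) * (ℓ / μ) + ρ * (1 + ℓ / μ) * ‖x₂ - x₁‖ := by
        have hmul : ‖HYY x₁ y₁ - HYY x₂ y₂‖ * ‖J x₂‖
            ≤ (ρ * (1 + ℓ / μ) * ‖x₂ - x₁‖) * (ℓ / μ) :=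
          mul_le_mul hyy hJ2 (norm_nonneg _)
            (mul_nonneg (mul_nonneg hρ0 h1μ) (norm_nonneg _))
        linarith [hxy]
      have hfin : (ρ * (1 + ℓ / μ) * ‖x₂ - x₁‖) * (ℓ / μ) + ρ * (1 + ℓ / μ) * ‖x₂ - x₁‖
          = ρ * (1 + ℓ / μ) ^ 2 * ‖x₂ - x₁‖ := by ring
      linarith [le_trans h htot]
    rw [hC]
    have : ‖J x₂ - J x₁‖ ≤ (ρ * (1 + ℓ / μ) ^ 2 * ‖x₂ - x₁‖) / μ := by
      rw [le_div_iff₀ hμ, mul_comm (‖J x₂ - J x₁‖) μ]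
      exact hμJ
    calc ‖J x₂ - J x₁‖ ≤ (ρ * (1 + ℓ / μ) ^ 2 * ‖x₂ - x₁‖) / μ := this
      _ = ρ / μ * (1 + ℓ / μ) ^ 2 * ‖x₂ - x₁‖ := by ring
  intro x₀
  have hlip : LipschitzWith C.toNNReal J := by
    apply LipschitzWith.of_dist_le_mul
    intro a b
    rw [dist_eq_norm, dist_eq_norm, Real.coe_toNNReal _ hC0]
    exact hJlip b a
  have := (hJ' x₀).le_of_lipschitz hlip
  rwa [Real.coe_toNNReal _ hC0] at this
end

section
/- Let g(x,·) be μ-strongly convex with ℓ-Lipschitz gradient in y, and consider gradient descent y^{t} = y^{t-1} − (1/ℓ)∇_y g(x, y^{t-1}) on the inner problem. Suppose additionally that y*(x) is κ-Lipschitz in x (κ = ℓ/μ). If the warm-start rule y_k⁰ = y_{k-1}^D is used across outer iterations with outer updates ‖x_k − x_{k-1}‖ ≤ ηG (gradient norms bounded by G), and D is chosen so that (1 − 1/κ)^{D/2} ≤ 1/2, then for all k: ‖y_k⁰ − y*(x_k)‖ ≤ (1/2)^k ‖y₀⁰ − y*(x₀)‖ + 2ηκG. -/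
open RealInnerProductSpace Set

lemma aux_lower {E : Type*} [NormedAddCommGroup E] [InnerProductSpace ℝ E] [CompleteSpace E]
    {f : E → ℝ} {m : ℝ} (hsc : StrongConvexOn Set.univ m f)
    {y fy : E} (hy : HasGradientAt f fy y) (z : E) :
    f y + ⟪fy, z - y⟫ + m / 2 * ‖z - y‖ ^ 2 ≤ f z := by
  set c := z - y with hc
  have hpath : ∀ t : ℝ, HasDerivAt (fun t : ℝ => y + t • c) c t := fun t => by
    simpa using ((hasDerivAt_id t).smul_const c).const_add y
  have hh : HasDerivAt (fun t : ℝ => f (y + t • c)) ⟪fy, c⟫ 0 := by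
    have h0 : y + (0 : ℝ) • c = y := by simp
    have hf : HasFDerivAt f (InnerProductSpace.toDual ℝ E fy) (y + (0 : ℝ) • c) := by
      rw [h0]; exact hy.hasFDerivAt
    have := hf.comp_hasDerivAt (0 : ℝ) (hpath 0)
    simp [InnerProductSpace.toDual_apply_apply] at this
    convert this using 1 <;> rfl
  have hs : Filter.Tendsto (slope (fun t : ℝ => f (y + t • c)) 0) (nhdsWithin 0 (Set.Ioi 0))
      (nhds ⟪fy, c⟫) := by
    refine (hasDerivAt_iff_tendsto_slope.mp hh).mono_left (nhdsWithin_mono _ ?_)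
    intro t ht
    simp only [Set.mem_compl_iff, Set.mem_singleton_iff]
    exact ne_of_gt ht
  have hG : Filter.Tendsto (fun t : ℝ => f z - f y - (1 - t) * (m / 2 * ‖c‖ ^ 2))
      (nhdsWithin 0 (Set.Ioi 0)) (nhds (f z - f y - m / 2 * ‖c‖ ^ 2)) := by
    have hcont : Continuous fun t : ℝ => f z - f y - (1 - t) * (m / 2 * ‖c‖ ^ 2) := by
      continuity
    have := hcont.tendsto 0
    simp only [sub_zero, one_mul] at this
    exact this.mono_left nhdsWithin_le_nhds
  have hev : ∀ᶠ t in nhdsWithin (0:ℝ) (Set.Ioi 0),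
      slope (fun t : ℝ => f (y + t • c)) 0 t ≤ f z - f y - (1 - t) * (m / 2 * ‖c‖ ^ 2) := by
    filter_upwards [Ioc_mem_nhdsGT_of_mem (by norm_num : (0:ℝ) ∈ Set.Ico 0 1)] with t ht
    have ht0 : 0 < t := ht.1
    have ht1 : t ≤ 1 := ht.2
    have hcomb : f (y + t • c) ≤ t * f z + (1 - t) * f y - t * (1 - t) * (m / 2 * ‖z - y‖ ^ 2) := by
      have := hsc.2 (Set.mem_univ z) (Set.mem_univ y) ht0.le (by linarith : (0:ℝ) ≤ 1 - t)
        (by ring)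
      have heq : t • z + (1 - t) • y = y + t • c := by
        rw [hc]; module
      rw [heq] at this
      simpa [smul_eq_mul] using this
    have hslope : slope (fun t : ℝ => f (y + t • c)) 0 t
        = (f (y + t • c) - f (y + (0:ℝ) • c)) / t := by
      simp [slope, vsub_eq_sub, smul_eq_mul, div_eq_inv_mul]
    rw [hslope]
    rw [div_le_iff₀ ht0]
    have hz : ‖z - y‖ ^ 2 = ‖c‖ ^ 2 := by rw [hc]
    simp only [zero_smul, add_zero]
    nlinarith [hcomb, hz]
  have := le_of_tendsto_of_tendsto hs hG hev
  linarith

lemma aux_descent {E : Type*} [NormedAddCommGroup E] [InnerProductSpace ℝ E] [CompleteSpace E]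
    {f : E → ℝ} {f' : E → E} {L : ℝ}
    (hd : ∀ w, HasGradientAt f (f' w) w)
    (hlip : ∀ w w', ‖f' w - f' w'‖ ≤ L * ‖w - w'‖) (y z : E) :
    f z ≤ f y + ⟪f' y, z - y⟫ + L / 2 * ‖z - y‖ ^ 2 := by
  set c := z - y with hc
  have hpath : ∀ t : ℝ, HasDerivAt (fun t : ℝ => y + t • c) c t := fun t => by
    simpa using ((hasDerivAt_id t).smul_const c).const_add y
  set H : ℝ → ℝ := fun t => f (y + t • c) - t * ⟪f' y, c⟫ - L / 2 * t ^ 2 * ‖c‖ ^ 2 with hH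
  have hderiv : ∀ t : ℝ, HasDerivAt H
      (⟪f' (y + t • c), c⟫ - ⟪f' y, c⟫ - L * t * ‖c‖ ^ 2) t := by
    intro t
    have h1 : HasDerivAt (fun t : ℝ => f (y + t • c)) ⟪f' (y + t • c), c⟫ t := by
      have := ((hd (y + t • c)).hasFDerivAt.comp_hasDerivAt t (hpath t))
      simp [InnerProductSpace.toDual_apply_apply] at this
      convert this using 1 <;> rfl
    have h2 : HasDerivAt (fun t : ℝ => t * ⟪f' y, c⟫) ⟪f' y, c⟫ t := by
      simpa using (hasDerivAt_id t).mul_const (⟪f' y, c⟫)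
    have h3 : HasDerivAt (fun t : ℝ => L / 2 * t ^ 2 * ‖c‖ ^ 2) (L * t * ‖c‖ ^ 2) t := by
      have := (HasDerivAt.const_mul (L / 2) (hasDerivAt_pow 2 t)).mul_const (‖c‖ ^ 2)
      convert this using 1
      rfl
      rfl
      push_cast
      ring
    convert (h1.sub h2).sub h3 using 1 <;> rfl
  have hdiff : Differentiable ℝ H := fun t => (hderiv t).differentiableAt
  have hmono : AntitoneOn H (Set.Icc 0 1) := by
    apply antitoneOn_of_deriv_nonpos (convex_Icc 0 1) hdiff.continuous.continuousOn
      (hdiff.differentiableOn)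
    intro t ht
    rw [interior_Icc] at ht
    rw [(hderiv t).deriv]
    have h1 : ⟪f' (y + t • c) - f' y, c⟫ ≤ ‖f' (y + t • c) - f' y‖ * ‖c‖ :=
      real_inner_le_norm _ _
    have h2 : ‖f' (y + t • c) - f' y‖ ≤ L * (t * ‖c‖) := by
      have := hlip (y + t • c) y
      simpa [norm_smul, abs_of_pos ht.1] using this
    have h3 : ⟪f' (y + t • c), c⟫ - ⟪f' y, c⟫ = ⟪f' (y + t • c) - f' y, c⟫ := by
      rw [inner_sub_left]
    nlinarith [norm_nonneg c, norm_nonneg (f' (y + t • c) - f' y)]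
  have := hmono (Set.mem_Icc.mpr ⟨le_refl 0, zero_le_one⟩)
    (Set.mem_Icc.mpr ⟨zero_le_one, le_refl 1⟩) zero_le_one
  have hH1 : H 1 = f z - ⟪f' y, c⟫ - L / 2 * ‖c‖ ^ 2 := by
    simp [hH, hc]
  have hH0 : H 0 = f y := by simp [hH]
  rw [hH1, hH0] at this
  linarith
/-- Warm-started inner gradient-descent loops keep the inner error uniformly bounded. -/
theorem stmt_16 {d n : ℕ}
    (g : EuclideanSpace ℝ (Fin d) → EuclideanSpace ℝ (Fin n) → ℝ)
    (μ ℓ κ η G : ℝ) (hμ : 0 < μ) (hμℓ : μ ≤ ℓ) (hκ : κ = ℓ / μ)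
    (hη : 0 ≤ η) (hG : 0 ≤ G)
    (hsc : ∀ x, StrongConvexOn Set.univ μ (g x))
    (GY : EuclideanSpace ℝ (Fin d) → EuclideanSpace ℝ (Fin n) → EuclideanSpace ℝ (Fin n))
    (hGY : ∀ x y, HasGradientAt (g x) (GY x y) y)
    (hGYlip : ∀ x y y', ‖GY x y - GY x y'‖ ≤ ℓ * ‖y - y'‖)
    (ystar : EuclideanSpace ℝ (Fin d) → EuclideanSpace ℝ (Fin n))
    (hmin : ∀ x y, g x (ystar x) ≤ g x y)
    -- y*(x) is κ-Lipschitz in x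
    (hystarlip : ∀ x x', ‖ystar x - ystar x'‖ ≤ κ * ‖x - x'‖)
    -- outer iterates with bounded updates
    (x : ℕ → EuclideanSpace ℝ (Fin d))
    (hx : ∀ k, ‖x (k + 1) - x k‖ ≤ η * G)
    -- inner gradient descent with warm starts
    (D : ℕ) (hD : (1 - 1 / κ) ^ ((D : ℝ) / 2) ≤ 1 / 2)
    (Y : ℕ → ℕ → EuclideanSpace ℝ (Fin n))
    (hwarm : ∀ k, Y (k + 1) 0 = Y k D)
    (hinner : ∀ k t, Y k (t + 1) = Y k t - (1 / ℓ) • GY (x k) (Y k t)) :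
    ∀ k, ‖Y k 0 - ystar (x k)‖ ≤ (1 / 2) ^ k * ‖Y 0 0 - ystar (x 0)‖ + 2 * η * κ * G := by
  have hℓ : 0 < ℓ := hμ.trans_le hμℓ
  have hκ1 : (1 : ℝ) ≤ κ := by rw [hκ, le_div_iff₀ hμ]; linarith
  have hκ0 : 0 < κ := lt_of_lt_of_le one_pos hκ1
  have hml : 0 ≤ 1 - μ / ℓ := by
    have : μ / ℓ ≤ 1 := (div_le_one hℓ).mpr hμℓ
    linarith
  set c : ℝ := Real.sqrt (1 - μ / ℓ) with hcdef
  have hc0 : 0 ≤ c := Real.sqrt_nonneg _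
  -- one-step contraction of the inner loop
  have hstep : ∀ (xx : EuclideanSpace ℝ (Fin d)) (w : EuclideanSpace ℝ (Fin n)),
      ‖(w - (1 / ℓ) • GY xx w) - ystar xx‖ ≤ c * ‖w - ystar xx‖ := by
    intro xx w
    set zs := ystar xx with hzs
    set v := GY xx w with hv
    have hlow := aux_lower (hsc xx) (hGY xx w) zs
    have hdesc := aux_descent (hGY xx) (hGYlip xx) w (w - (1 / ℓ) • v)
    have hminw := hmin xx (w - (1 / ℓ) • v)
    -- simplify descent bound
    have hsub : (w - (1 / ℓ) • v) - w = -((1 / ℓ) • v) := by abel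
    rw [hsub] at hdesc
    have hin1 : ⟪v, -((1 / ℓ) • v)⟫ = -(1 / ℓ) * ‖v‖ ^ 2 := by
      rw [inner_neg_right, real_inner_smul_right, real_inner_self_eq_norm_sq]
      ring
    have hin2 : ‖-((1 / ℓ) • v)‖ ^ 2 = (1 / ℓ) ^ 2 * ‖v‖ ^ 2 := by
      rw [norm_neg, norm_smul]
      rw [Real.norm_eq_abs, mul_pow, sq_abs]
    rw [hin1, hin2] at hdesc
    -- f zs ≤ f w - 1/(2ℓ) ‖v‖²
    have hdesc2 : g xx zs ≤ g xx w - 1 / (2 * ℓ) * ‖v‖ ^ 2 := by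
      have h2 : ℓ / 2 * ((1 / ℓ) ^ 2 * ‖v‖ ^ 2) = 1 / (2 * ℓ) * ‖v‖ ^ 2 := by
        field_simp
      calc g xx zs ≤ g xx (w - (1 / ℓ) • v) := hminw
        _ ≤ g xx w + (-(1 / ℓ) * ‖v‖ ^ 2) + ℓ / 2 * ((1 / ℓ) ^ 2 * ‖v‖ ^ 2) := hdesc
        _ = g xx w - 1 / (2 * ℓ) * ‖v‖ ^ 2 := by rw [h2]; field_simp; ring
    -- lower bound: ⟪v, zs - w⟫ = -⟪v, w - zs⟫
    have hin3 : ⟪v, zs - w⟫ = -⟪v, w - zs⟫ := by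
      rw [← inner_neg_right]; congr 1; abel
    rw [hin3] at hlow
    have hnz : ‖zs - w‖ = ‖w - zs‖ := norm_sub_rev _ _
    rw [hnz] at hlow
    -- key combined inequality
    have hp : 1 / (2 * ℓ) * ‖v‖ ^ 2 + μ / 2 * ‖w - zs‖ ^ 2 ≤ ⟪v, w - zs⟫ := by linarith
    -- expand the squared norm of the new iterate
    have hexp : ‖(w - (1 / ℓ) • v) - zs‖ ^ 2
        = ‖w - zs‖ ^ 2 - 2 * (1 / ℓ) * ⟪v, w - zs⟫ + (1 / ℓ) ^ 2 * ‖v‖ ^ 2 := by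
      have : (w - (1 / ℓ) • v) - zs = (w - zs) - (1 / ℓ) • v := by abel
      rw [this, norm_sub_sq_real, real_inner_smul_right, norm_smul, Real.norm_eq_abs,
        mul_pow, sq_abs, real_inner_comm]
      ring
    have hkey : ‖(w - (1 / ℓ) • v) - zs‖ ^ 2 ≤ (1 - μ / ℓ) * ‖w - zs‖ ^ 2 := by
      rw [hexp]
      have hℓ' : (0:ℝ) < 1 / ℓ := by positivity
      have e1 : 2 * (1 / ℓ) * (1 / (2 * ℓ) * ‖v‖ ^ 2) = (1 / ℓ) ^ 2 * ‖v‖ ^ 2 := by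
        field_simp
      have e2 : 2 * (1 / ℓ) * (μ / 2 * ‖w - zs‖ ^ 2) = μ / ℓ * ‖w - zs‖ ^ 2 := by
        field_simp
      nlinarith [mul_le_mul_of_nonneg_left hp (le_of_lt (by positivity : (0:ℝ) < 2 * (1 / ℓ)))]
    calc ‖(w - (1 / ℓ) • v) - zs‖ = Real.sqrt (‖(w - (1 / ℓ) • v) - zs‖ ^ 2) := by
          rw [Real.sqrt_sq (norm_nonneg _)]
      _ ≤ Real.sqrt ((1 - μ / ℓ) * ‖w - zs‖ ^ 2) := Real.sqrt_le_sqrt hkey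
      _ = c * ‖w - zs‖ := by
          rw [Real.sqrt_mul hml, Real.sqrt_sq (norm_nonneg _)]
  -- inner loop contraction over t steps
  have hloop : ∀ k t, ‖Y k t - ystar (x k)‖ ≤ c ^ t * ‖Y k 0 - ystar (x k)‖ := by
    intro k t
    induction t with
    | zero => simp
    | succ t ih =>
      rw [hinner k t]
      calc ‖Y k t - (1 / ℓ) • GY (x k) (Y k t) - ystar (x k)‖
          ≤ c * ‖Y k t - ystar (x k)‖ := hstep _ _
        _ ≤ c * (c ^ t * ‖Y k 0 - ystar (x k)‖) := by
            exact mul_le_mul_of_nonneg_left ih hc0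
        _ = c ^ (t + 1) * ‖Y k 0 - ystar (x k)‖ := by ring
  -- c ^ D ≤ 1/2
  have hcD : c ^ D ≤ 1 / 2 := by
    have h1 : (1 : ℝ) - 1 / κ = 1 - μ / ℓ := by rw [hκ, one_div_div]
    have h2 : c ^ D = (1 - 1 / κ) ^ ((D : ℝ) / 2) := by
      rw [h1, hcdef, Real.sqrt_eq_rpow, ← Real.rpow_natCast ((1 - μ / ℓ) ^ ((1:ℝ)/2)) D,
        ← Real.rpow_mul hml]
      congr 1
      ring
    rw [h2]; exact hD
  -- outer recursion
  have houter : ∀ k, ‖Y (k + 1) 0 - ystar (x (k + 1))‖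
      ≤ 1 / 2 * ‖Y k 0 - ystar (x k)‖ + κ * (η * G) := by
    intro k
    rw [hwarm k]
    have htri : ‖Y k D - ystar (x (k + 1))‖
        ≤ ‖Y k D - ystar (x k)‖ + ‖ystar (x k) - ystar (x (k + 1))‖ := by
      have := dist_triangle (Y k D) (ystar (x k)) (ystar (x (k + 1)))
      simpa [dist_eq_norm] using this
    have h1 : ‖Y k D - ystar (x k)‖ ≤ 1 / 2 * ‖Y k 0 - ystar (x k)‖ :=
      (hloop k D).trans (mul_le_mul_of_nonneg_right hcD (norm_nonneg _))
    have h2 : ‖ystar (x k) - ystar (x (k + 1))‖ ≤ κ * (η * G) := by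
      refine (hystarlip _ _).trans ?_
      rw [norm_sub_rev]
      exact mul_le_mul_of_nonneg_left (hx k) hκ0.le
    linarith
  -- final induction
  intro k
  induction k with
  | zero =>
    have : (0:ℝ) ≤ 2 * η * κ * G := by positivity
    simp only [pow_zero, one_mul]
    linarith
  | succ k ih =>
    have hrec := houter k
    set A := ‖Y 0 0 - ystar (x 0)‖ with hA
    set ak := ‖Y k 0 - ystar (x k)‖ with hak
    set ak1 := ‖Y (k + 1) 0 - ystar (x (k + 1))‖ with hak1
    clear_value A ak ak1
    have hp : (1 / 2 : ℝ) ^ (k + 1) = 1 / 2 * (1 / 2) ^ k := by ring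
    calc ak1 ≤ 1 / 2 * ak + κ * (η * G) := hrec
      _ ≤ 1 / 2 * ((1 / 2) ^ k * A + 2 * η * κ * G) + κ * (η * G) :=
          add_le_add (mul_le_mul_of_nonneg_left ih (by norm_num)) le_rfl
      _ = 1 / 2 * (1 / 2) ^ k * A + 2 * η * κ * G := by ring
      _ = (1 / 2) ^ (k + 1) * A + 2 * η * κ * G := by rw [hp]
end
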